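/- arXiv:0907.1166 — 4 statements merged into one kernel-verified Lean document; each statement's English description precedes it below -/
import Mathlib

section
/- For every graph G that is cubic with girth at least g, and every set S of vertices, the number of connected components of G − S that have odd order and are joined to S by exactly one edge is at most n/g, where n is the number of vertices of G. -/
open SimpleGraph

lemma aux_reach_induce {V : Type*} {G : SimpleGraph V} {s : Set V} :
    ∀ {u v : V} (w : G.Walk u v), (∀ x ∈ w.support, x ∈ s) →
    ∀ (hu : u ∈ s) (hv : v ∈ s), (G.induce s).Reachable ⟨u, hu⟩ ⟨v, hv⟩ := by
  intro u v w
  induction w with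
  | nil => intro _ hu hv; rfl
  | @cons a b c h p ih =>
      intro hs hu hv
      have hb : b ∈ s := hs b (by simp)
      have : (G.induce s).Adj ⟨a, hu⟩ ⟨b, hb⟩ := by simpa using h
      exact this.reachable.trans (ih (fun x hx => hs x (by simp [hx])) hb hv)

lemma aux_key (V : Type) [Fintype V] (G : SimpleGraph V) [DecidableRel G.Adj]
    (g : ℕ) (hg : 3 ≤ g) (hcubic : ∀ v : V, G.degree v = 3)
    (hgirth : (g : ℕ∞) ≤ G.egirth) (S : Set V)
    (C : (G.induce Sᶜ).ConnectedComponent)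
    (hC : {p : (Sᶜ : Set V) × V | p.2 ∈ S ∧ G.Adj (p.1 : V) p.2 ∧
            (G.induce Sᶜ).connectedComponentMk p.1 = C}.ncard = 1) :
    g ≤ Nat.card C.supp := by
  classical
  -- connectivity of the component as induced graph
  have hsupp_walk : ∀ (u : ↥Sᶜ), u ∈ C.supp → ∀ (w : (G.induce Sᶜ).Walk u u) (x : ↥Sᶜ), x ∈ w.support → x ∈ C.supp := by
    intro u hu w x hx
    have : (G.induce Sᶜ).Reachable u x := (w.takeUntil x hx).reachable
    show (G.induce Sᶜ).connectedComponentMk x = C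
    exact (ConnectedComponent.sound this.symm).trans hu
  have hconn : ((G.induce Sᶜ).induce C.supp).Connected := by
    obtain ⟨v, hv⟩ := C.exists_rep
    have hvK : v ∈ C.supp := hv
    rw [connected_iff]
    refine ⟨fun a b => ?_, ⟨⟨v, hvK⟩⟩⟩
    · 
      have ha : (a : ↥Sᶜ) ∈ C.supp := a.2
      have hb : (b : ↥Sᶜ) ∈ C.supp := b.2
      have ha' : (G.induce Sᶜ).connectedComponentMk a = C := ha
      have hb' : (G.induce Sᶜ).connectedComponentMk b = C := hb
      have hr : (G.induce Sᶜ).Reachable a b := ConnectedComponent.exact (ha'.trans hb'.symm)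
      obtain ⟨w⟩ := hr
      have hws : ∀ x ∈ w.support, x ∈ C.supp := by
        intro x hx
        have : (G.induce Sᶜ).Reachable (a : ↥Sᶜ) x := (w.takeUntil x hx).reachable
        show (G.induce Sᶜ).connectedComponentMk x = C
        exact (ConnectedComponent.sound this.symm).trans ha'
      have := aux_reach_induce w hws a.2 b.2
      simpa using this
  by_cases hac : ((G.induce Sᶜ).induce C.supp).IsAcyclic
  · exfalso
    haveI : Fintype ↥C.supp := Fintype.ofFinite _
    haveI : DecidableRel ((G.induce Sᶜ).induce C.supp).Adj := Classical.decRel _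
    have htree : ((G.induce Sᶜ).induce C.supp).IsTree := ⟨hconn, hac⟩
    have hedges := htree.card_edgeFinset
    have hhand := SimpleGraph.sum_degrees_eq_twice_card_edges ((G.induce Sᶜ).induce C.supp)
    -- adjacency unfolds
    have hadj' : ∀ a b : ↥C.supp, ((G.induce Sᶜ).induce C.supp).Adj a b ↔
        G.Adj (↑↑a : V) (↑↑b : V) := fun a b => Iff.rfl
    -- membership of neighbors
    have hmem : ∀ (v : ↥C.supp) (x : V), G.Adj (↑↑v : V) x → x ∉ S →
        ∃ hx : x ∈ Sᶜ, (⟨x, hx⟩ : ↥Sᶜ) ∈ C.supp := by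
      intro v x hadj hxS
      refine ⟨hxS, ?_⟩
      have hHadj : (G.induce Sᶜ).Adj (↑v : ↥Sᶜ) ⟨x, hxS⟩ := by simpa using hadj
      show (G.induce Sᶜ).connectedComponentMk ⟨x, hxS⟩ = C
      have := SimpleGraph.ConnectedComponent.connectedComponentMk_eq_of_adj hHadj.symm
      exact this.trans (v.2 : _)
    -- degree split
    have hdeg : ∀ v : ↥C.supp, ((G.induce Sᶜ).induce C.supp).degree v
        = ((G.neighborFinset (↑↑v : V)).filter (fun x => x ∉ S)).card := by
      intro v
      show (((G.induce Sᶜ).induce C.supp).neighborFinset v).card = _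
      apply Finset.card_bij (fun (a : ↥C.supp) _ => (↑↑a : V))
      · intro a ha
        simp only [SimpleGraph.mem_neighborFinset] at ha
        simp only [Finset.mem_filter, SimpleGraph.mem_neighborFinset]
        exact ⟨(hadj' v a).mp ha, (↑a : ↥Sᶜ).2⟩
      · intro a _ b _ hab
        ext
        · exact hab
      · intro x hx
        simp only [Finset.mem_filter, SimpleGraph.mem_neighborFinset] at hx
        obtain ⟨hx1, hx2⟩ := hmem v x hx.1 hx.2
        refine ⟨⟨⟨x, hx1⟩, hx2⟩, ?_, rfl⟩
        simp only [SimpleGraph.mem_neighborFinset]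
        exact (hadj' v ⟨⟨x, hx1⟩, hx2⟩).mpr hx.1
    have hsplit : ∀ v : ↥C.supp,
        ((G.neighborFinset (↑↑v : V)).filter (fun x => x ∈ S)).card
          + ((G.induce Sᶜ).induce C.supp).degree v = 3 := by
      intro v
      rw [hdeg v, Finset.card_filter_add_card_filter_not]
      exact hcubic _
    have hsum1 : ∑ v : ↥C.supp,
        ((G.neighborFinset (↑↑v : V)).filter (fun x => x ∈ S)).card = 1 := by
      rw [← hC, Set.ncard_eq_toFinset_card', ← Finset.card_sigma]
      apply Finset.card_bij (fun (a : (_ : ↥C.supp) × V) _ => ((↑a.1 : ↥Sᶜ), a.2))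
      · rintro ⟨v, x⟩ h
        simp only [Finset.mem_sigma, Finset.mem_univ, true_and, Finset.mem_filter,
          SimpleGraph.mem_neighborFinset] at h
        simp only [Set.mem_toFinset, Set.mem_setOf_eq]
        exact ⟨h.2, h.1, (v.2 : _)⟩
      · rintro ⟨v, x⟩ _ ⟨w, y⟩ _ h
        simp only [Prod.mk.injEq] at h
        obtain ⟨h1, h2⟩ := h
        subst h2
        congr 1
        exact Subtype.ext h1
      · rintro ⟨u, x⟩ h
        simp only [Set.mem_toFinset, Set.mem_setOf_eq] at h
        refine ⟨⟨⟨u, h.2.2⟩, x⟩, ?_, rfl⟩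
        simp only [Finset.mem_sigma, Finset.mem_univ, true_and, Finset.mem_filter,
          SimpleGraph.mem_neighborFinset]
        exact ⟨h.2.1, h.1⟩
    have hk1 : 1 ≤ Fintype.card ↥C.supp := by
      have := hconn.nonempty
      exact Fintype.card_pos
    have h3k : ∑ v : ↥C.supp,
        (((G.neighborFinset (↑↑v : V)).filter (fun x => x ∈ S)).card
          + ((G.induce Sᶜ).induce C.supp).degree v) = 3 * Fintype.card ↥C.supp := by
      rw [Finset.sum_congr rfl (fun v _ => hsplit v), Finset.sum_const, Finset.card_univ,
        smul_eq_mul, mul_comm]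
    rw [Finset.sum_add_distrib, hsum1, hhand] at h3k
    omega
  · unfold IsAcyclic at hac
    push_neg at hac
    obtain ⟨a, w, hcyc⟩ := hac
    have : Fintype ↥C.supp := Fintype.ofFinite _
    let emb : ((G.induce Sᶜ).induce C.supp) ↪g G :=
      (SimpleGraph.Embedding.induce Sᶜ).comp (SimpleGraph.Embedding.induce C.supp)
    have hcyc' : (w.map emb.toHom).IsCycle := hcyc.map (f := emb.toHom) emb.injective
    have h1 : G.egirth ≤ ((w.map emb.toHom).length : ℕ∞) := le_egirth.mp le_rfl _ _ hcyc'
    have h2 : (g : ℕ∞) ≤ (w.length : ℕ∞) := (hgirth.trans h1).trans_eq (congrArg (fun n : ℕ => (n : ℕ∞)) (Walk.length_map emb.toHom w))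
    have h3 : g ≤ w.length := by exact_mod_cast h2
    have h4 : w.length ≤ Fintype.card ↥C.supp := by
      have h5 := hcyc.support_nodup.length_le_card
      have hlen : w.support.length = w.length + 1 := Walk.length_support w
      simp only [List.length_tail, hlen] at h5
      omega
    calc g ≤ w.length := h3
    _ ≤ Fintype.card ↥C.supp := h4
    _ = Nat.card C.supp := Nat.card_eq_fintype_card.symm

/-- main theorem -/
theorem stmt1 (V : Type) [Fintype V] (G : SimpleGraph V) [DecidableRel G.Adj]
    (g : ℕ) (hg : 3 ≤ g) (hcubic : ∀ v : V, G.degree v = 3)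
    (hgirth : (g : ℕ∞) ≤ G.egirth) (S : Set V) :
    ({C : (G.induce Sᶜ).ConnectedComponent |
        Odd (Nat.card C.supp) ∧
        {p : (Sᶜ : Set V) × V | p.2 ∈ S ∧ G.Adj (p.1 : V) p.2 ∧
            (G.induce Sᶜ).connectedComponentMk p.1 = C}.ncard = 1}.ncard : ℝ)
      ≤ (Fintype.card V : ℝ) / g := by
  classical
  have hTfin : {C : (G.induce Sᶜ).ConnectedComponent |
        Odd (Nat.card C.supp) ∧
        {p : (Sᶜ : Set V) × V | p.2 ∈ S ∧ G.Adj (p.1 : V) p.2 ∧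
            (G.induce Sᶜ).connectedComponentMk p.1 = C}.ncard = 1}.Finite := by
    haveI : Finite ((G.induce Sᶜ).ConnectedComponent) := by
      haveI : Finite ↥Sᶜ := Subtype.finite
      infer_instance
    exact Set.toFinite _
  set F := hTfin.toFinset with hF
  have hnat : F.card * g ≤ Fintype.card V := by
    calc F.card * g = F.card • g := by rw [smul_eq_mul]
    _ ≤ ∑ C ∈ F, C.supp.toFinset.card := by
        apply Finset.card_nsmul_le_sum
        intro C hCF
        rw [hF, Set.Finite.mem_toFinset] at hCF
        have := aux_key V G g hg hcubic hgirth S C hCF.2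
        rwa [Nat.card_eq_fintype_card, ← Set.toFinset_card] at this
    _ = (F.biUnion (fun C => C.supp.toFinset)).card := by
        rw [Finset.card_biUnion]
        intro x _ y _ hxy
        simpa [Set.disjoint_toFinset] using
          pairwise_disjoint_supp_connectedComponent (G.induce Sᶜ) hxy
    _ ≤ Fintype.card ↥Sᶜ := Finset.card_le_univ _
    _ ≤ Fintype.card V := Fintype.card_le_of_injective _ Subtype.val_injective
  have hg0 : (0 : ℝ) < g := by exact_mod_cast (by omega : 0 < g)
  rw [le_div_iff₀ hg0]
  have hcardF : ({C : (G.induce Sᶜ).ConnectedComponent |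
        Odd (Nat.card C.supp) ∧
        {p : (Sᶜ : Set V) × V | p.2 ∈ S ∧ G.Adj (p.1 : V) p.2 ∧
            (G.induce Sᶜ).connectedComponentMk p.1 = C}.ncard = 1}.ncard) = F.card :=
    Set.ncard_eq_toFinset_card _ hTfin
  rw [hcardF]
  exact_mod_cast hnat
end

section
/- Every n-vertex cubic graph with girth at least g has a matching covering all but at most n/g vertices. -/
open SimpleGraph Relation

namespace TBaux

variable {V : Type}

/-- adjacency within a set -/
def AdjIn (G : SimpleGraph V) (s : Set V) (a b : V) : Prop := G.Adj a b ∧ a ∈ s ∧ b ∈ s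

variable {G : SimpleGraph V}

lemma adjIn_symm {s : Set V} : Symmetric (AdjIn G s) :=
  fun _ _ h => ⟨h.1.symm, h.2.2, h.2.1⟩

lemma adjIn_mono {s t : Set V} (h : s ⊆ t) {a b : V} (hab : AdjIn G s a b) : AdjIn G t a b :=
  ⟨hab.1, h hab.2.1, h hab.2.2⟩

/-- the connected component of `v` in ground set `s` -/
def comp (G : SimpleGraph V) (s : Set V) (v : V) : Set V := {w | ReflTransGen (AdjIn G s) v w}

lemma mem_comp_self (G : SimpleGraph V) (s : Set V) (v : V) : v ∈ comp G s v := ReflTransGen.refl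

lemma comp_subset {s : Set V} {v : V} (hv : v ∈ s) : comp G s v ⊆ s := by
  intro w hw
  induction hw with
  | refl => exact hv
  | tail _ h ih => exact h.2.2

lemma mem_comp_symm {s : Set V} {v w : V} (h : w ∈ comp G s v) : v ∈ comp G s w :=
  (@ReflTransGen.stdSymm _ _ ⟨fun _ _ h' => adjIn_symm h'⟩).symm _ _ h

lemma comp_eq_of_mem {s : Set V} {v w : V} (h : w ∈ comp G s v) : comp G s w = comp G s v := by
  ext x
  constructor
  · intro hx; exact ReflTransGen.trans h hx
  · intro hx; exact ReflTransGen.trans (mem_comp_symm h) hx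

lemma comp_closed {s : Set V} {v w x : V} (hw : w ∈ comp G s v) (hws : w ∈ s)
    (hx : x ∈ s) (hadj : G.Adj w x) : x ∈ comp G s v :=
  ReflTransGen.tail hw ⟨hadj, hws, hx⟩

lemma comp_conn {s : Set V} {v w : V} (h : w ∈ comp G s v) :
    ReflTransGen (AdjIn G (comp G s v)) v w := by
  induction h with
  | refl => exact ReflTransGen.refl
  | @tail b c hb hbc ih =>
      exact ReflTransGen.tail ih ⟨hbc.1, hb, ReflTransGen.tail hb hbc⟩

lemma comp_mono {s t : Set V} (h : s ⊆ t) (v : V) : comp G s v ⊆ comp G t v := by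
  intro w hw
  induction hw with
  | refl => exact ReflTransGen.refl
  | tail _ h2 ih => exact ReflTransGen.tail ih (adjIn_mono h h2)

/-- main characterization tool : a connected closed set is the component of each of its points -/
lemma comp_eq_of {s c : Set V} {v : V} (hv : v ∈ c) (hcs : c ⊆ s)
    (hcl : ∀ a ∈ c, ∀ b ∈ s, G.Adj a b → b ∈ c)
    (hconn : ∀ w ∈ c, ReflTransGen (AdjIn G c) v w) :
    comp G s v = c := by
  apply Set.Subset.antisymm
  · intro w hw
    induction hw with
    | refl => exact hv
    | tail _ h2 ih => exact hcl _ ih _ h2.2.2 h2.1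
  · intro w hw
    exact ReflTransGen.mono (fun a b hab => adjIn_mono hcs hab) _ _ (hconn w hw)

def IsComp (G : SimpleGraph V) (s c : Set V) : Prop := ∃ v ∈ s, c = comp G s v

namespace IsComp

lemma nonempty {s c : Set V} (h : IsComp G s c) : c.Nonempty := by
  obtain ⟨v, _, rfl⟩ := h; exact ⟨v, mem_comp_self G s v⟩

lemma subset {s c : Set V} (h : IsComp G s c) : c ⊆ s := by
  obtain ⟨v, hv, rfl⟩ := h; exact comp_subset hv

lemma closed {s c : Set V} (h : IsComp G s c) :
    ∀ a ∈ c, ∀ b ∈ s, G.Adj a b → b ∈ c := by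
  obtain ⟨v, hv, rfl⟩ := h
  intro a ha b hb hadj
  exact comp_closed ha (comp_subset hv ha) hb hadj

lemma comp_eq {s c : Set V} (h : IsComp G s c) {w : V} (hw : w ∈ c) :
    comp G s w = c := by
  obtain ⟨v, hv, rfl⟩ := h
  exact comp_eq_of_mem hw

lemma conn {s c : Set V} (h : IsComp G s c) {v w : V} (hv : v ∈ c) (hw : w ∈ c) :
    ReflTransGen (AdjIn G c) v w := by
  have h1 := h.comp_eq hv
  rw [← h1] at hw ⊢
  exact comp_conn hw

end IsComp

lemma isComp_of {s c : Set V} (hne : c.Nonempty) (hcs : c ⊆ s)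
    (hcl : ∀ a ∈ c, ∀ b ∈ s, G.Adj a b → b ∈ c)
    (hconn : ∀ v ∈ c, ∀ w ∈ c, ReflTransGen (AdjIn G c) v w) :
    IsComp G s c := by
  obtain ⟨v, hv⟩ := hne
  exact ⟨v, hcs hv, (comp_eq_of hv hcs hcl (hconn v hv)).symm⟩

namespace IsComp

/-- transfer a component to a new ground set in which it is still closed. -/
lemma transfer {s s' c : Set V} (h : IsComp G s c) (hcs' : c ⊆ s')
    (hcl : ∀ a ∈ c, ∀ b ∈ s', G.Adj a b → b ∈ c) : IsComp G s' c :=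
  isComp_of h.nonempty hcs' hcl (fun _ hv _ hw => h.conn hv hw)

/-- transfer to a smaller ground set: closedness is automatic. -/
lemma transfer_down {s s' c : Set V} (h : IsComp G s c) (hcs' : c ⊆ s')
    (hs' : s' ⊆ s) : IsComp G s' c :=
  h.transfer hcs' (fun a ha b hb => h.closed a ha b (hs' hb))

lemma eq_or_disjoint {s c c' : Set V} (h : IsComp G s c) (h' : IsComp G s c') :
    c = c' ∨ Disjoint c c' := by
  by_cases hd : Disjoint c c'
  · exact Or.inr hd
  · left
    obtain ⟨x, hx, hx'⟩ := Set.not_disjoint_iff.mp hd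
    rw [← h.comp_eq hx, ← h'.comp_eq hx']

lemma ground {s c : Set V} (h : IsComp G s c) : IsComp G c c :=
  h.transfer_down (le_refl c) h.subset

end IsComp

lemma isComp_ground_iff {s c c' : Set V} (h : IsComp G s c) :
    IsComp G c c' ↔ c' = c := by
  constructor
  · intro h'
    rcases h.ground.eq_or_disjoint h' with h2 | h2
    · exact h2.symm
    · exfalso
      obtain ⟨x, hx⟩ := h'.nonempty
      exact h2.ne_of_mem (h'.subset hx) hx rfl
  · rintro rfl; exact h.ground


set_option linter.unusedSectionVars false

section Counting
variable [Finite V]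

def oddComps (G : SimpleGraph V) (s : Set V) : Set (Set V) :=
  {c | IsComp G s c ∧ Odd c.ncard}

/-- splitting the ground set along a closed subset splits the components -/
lemma isComp_split {s t : Set V} (hts : t ⊆ s)
    (hcl : ∀ a ∈ t, ∀ b ∈ s, G.Adj a b → b ∈ t) (c : Set V) :
    IsComp G s c ↔ (IsComp G t c ∨ IsComp G (s \ t) c) := by
  have hclc : ∀ a ∈ s \ t, ∀ b ∈ s, G.Adj a b → b ∈ s \ t := by
    intro a ha b hb hadj
    refine ⟨hb, fun hbt => ha.2 (hcl b hbt a ha.1 hadj.symm)⟩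
  constructor
  · intro h
    obtain ⟨x, hx⟩ := h.nonempty
    by_cases hxt : x ∈ t
    · left
      have hct : ∀ w, ReflTransGen (AdjIn G c) x w → w ∈ t := by
        intro w hw
        induction hw with
        | refl => exact hxt
        | tail _ h2 ih => exact hcl _ ih _ (h.subset h2.2.2) h2.1
      have hcsub : c ⊆ t := fun w hw => hct w (h.conn hx hw)
      exact h.transfer hcsub (fun a ha b hb hadj => h.closed a ha b (hts hb) hadj)
    · right
      have hct : ∀ w, ReflTransGen (AdjIn G c) x w → w ∈ s \ t := by
        intro w hw
        induction hw with
        | refl => exact ⟨h.subset hx, hxt⟩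
        | tail _ h2 ih => exact hclc _ ih _ (h.subset h2.2.2) h2.1
      have hcsub : c ⊆ s \ t := fun w hw => hct w (h.conn hx hw)
      exact h.transfer hcsub (fun a ha b hb hadj => h.closed a ha b hb.1 hadj)
  · rintro (h | h)
    · refine h.transfer (h.subset.trans hts) ?_
      intro a ha b hb hadj
      exact h.closed a ha b (hcl a (h.subset ha) b hb hadj) hadj
    · refine h.transfer (h.subset.trans Set.diff_subset) ?_
      intro a ha b hb hadj
      exact h.closed a ha b (hclc a (h.subset ha) b hb hadj) hadj

lemma oddComps_split {s t : Set V} (hts : t ⊆ s)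
    (hcl : ∀ a ∈ t, ∀ b ∈ s, G.Adj a b → b ∈ t) :
    (oddComps G s).ncard = (oddComps G t).ncard + (oddComps G (s \ t)).ncard := by
  have hu : oddComps G s = oddComps G t ∪ oddComps G (s \ t) := by
    ext c
    simp only [oddComps, Set.mem_setOf_eq, Set.mem_union, isComp_split hts hcl c]
    tauto
  have hd : Disjoint (oddComps G t) (oddComps G (s \ t)) := by
    rw [Set.disjoint_left]
    rintro c ⟨h1, _⟩ ⟨h2, _⟩
    obtain ⟨x, hx⟩ := h1.nonempty
    exact (h2.subset hx).2 (h1.subset hx)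
  rw [hu, Set.ncard_union_eq hd (Set.toFinite _) (Set.toFinite _)]

lemma oddComps_ground {s c : Set V} (h : IsComp G s c) :
    oddComps G c = if Odd c.ncard then {c} else ∅ := by
  ext c'
  simp only [oddComps, Set.mem_setOf_eq, isComp_ground_iff h]
  by_cases hodd : Odd c.ncard
  · simp only [hodd, if_true, Set.mem_singleton_iff]
    exact ⟨fun h => h.1, fun h => ⟨h, h ▸ hodd⟩⟩
  · simp only [hodd, if_false, Set.mem_empty_iff_false, iff_false, not_and]
    rintro rfl
    exact hodd

lemma oddComps_ground_card {s c : Set V} (h : IsComp G s c) :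
    (oddComps G c).ncard = if Odd c.ncard then 1 else 0 := by
  rw [oddComps_ground h]
  split <;> simp

lemma oddComps_empty : oddComps G (∅ : Set V) = ∅ := by
  ext c
  simp only [oddComps, Set.mem_setOf_eq, Set.mem_empty_iff_false, iff_false]
  rintro ⟨h, _⟩
  obtain ⟨v, hv, _⟩ := h
  exact hv

/-- parity: the number of odd components has the same parity as the ground set -/
lemma oddComps_parity_aux (G : SimpleGraph V) : ∀ (n : ℕ) (s : Set V), s.ncard ≤ n →
    (oddComps G s).ncard % 2 = s.ncard % 2 := by
  intro n
  induction n with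
  | zero =>
      intro s hs
      have : s = ∅ := by
        rw [← Set.ncard_eq_zero (Set.toFinite s)]; omega
      subst this
      simp [oddComps_empty]
  | succ n ih =>
      intro s hs
      rcases Set.eq_empty_or_nonempty s with rfl | ⟨v, hv⟩
      · simp [oddComps_empty]
      · have hcomp : IsComp G s (comp G s v) := ⟨v, hv, rfl⟩
        set c := comp G s v with hc
        have hsplit := oddComps_split (G := G) hcomp.subset hcomp.closed
        have h1 := oddComps_ground_card hcomp
        have hc1 : 0 < c.ncard := by
          rw [Set.ncard_pos (Set.toFinite c)]
          exact hcomp.nonempty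
        have h4 : c.ncard ≤ s.ncard := Set.ncard_le_ncard hcomp.subset (Set.toFinite s)
        have h3 : (s \ c).ncard = s.ncard - c.ncard := Set.ncard_diff hcomp.subset
        have h2 : (oddComps G (s \ c)).ncard % 2 = (s \ c).ncard % 2 := by
          apply ih
          omega
        rw [hsplit, h1]
        rcases Nat.even_or_odd c.ncard with he | ho
        · have he' : c.ncard % 2 = 0 := Nat.even_iff.mp he
          simp only [Nat.not_odd_iff_even.mpr he, if_false]
          omega
        · have ho' : c.ncard % 2 = 1 := Nat.odd_iff.mp ho
          simp only [ho, if_true]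
          omega

lemma oddComps_parity (G : SimpleGraph V) (s : Set V) :
    (oddComps G s).ncard % 2 = s.ncard % 2 :=
  oddComps_parity_aux G s.ncard s le_rfl

end Counting

section Main
open Classical

theorem tb_main {V : Type} [Fintype V] (G : SimpleGraph V) :
    ∀ (N : ℕ) (u : Set V) (d : ℕ), u.ncard ≤ N → d % 2 = u.ncard % 2 →
    (∀ S : Set V, S ⊆ u → (oddComps G (u \ S)).ncard ≤ S.ncard + d) →
    ∃ M : G.Subgraph, M.IsMatching ∧ M.verts ⊆ u ∧ u.ncard ≤ M.verts.ncard + d := by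
  classical
  intro N
  induction N with
  | zero =>
      intro u d hN _ _
      have hu : u = ∅ := by rw [← Set.ncard_eq_zero (Set.toFinite u)]; omega
      subst hu
      refine ⟨⊥, ?_, by simp, by simp⟩
      intro v hv
      simp only [Subgraph.verts_bot, Set.mem_empty_iff_false] at hv
  | succ N ih =>
      intro u d
      induction d using Nat.strong_induction_on with
      | _ d ihd =>
      intro hN hpar hT
      set SS : Set (Set V) := {S | S ⊆ u ∧ (oddComps G (u \ S)).ncard = S.ncard + d} with hSSdef
      by_cases hne : SS.Nonempty
      case neg =>
        -- no tight set: we can lower d by 2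
        have hstrict : ∀ S : Set V, S ⊆ u → (oddComps G (u \ S)).ncard < S.ncard + d := by
          intro S hSu
          rcases lt_or_eq_of_le (hT S hSu) with h | h
          · exact h
          · exact absurd ⟨S, hSu, h⟩ hne
        have hd2 : 2 ≤ d := by
          by_contra hd
          have h0 := hstrict ∅ (Set.empty_subset u)
          have hpe := oddComps_parity G (u \ (∅ : Set V))
          rw [Set.diff_empty] at hpe h0
          simp only [Set.ncard_empty] at h0
          omega
        have hT' : ∀ S : Set V, S ⊆ u → (oddComps G (u \ S)).ncard ≤ S.ncard + (d - 2) := by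
          intro S hSu
          have h1 := hstrict S hSu
          have h2 := oddComps_parity G (u \ S)
          have h3 : (u \ S).ncard = u.ncard - S.ncard := Set.ncard_diff hSu
          have h4 : S.ncard ≤ u.ncard := Set.ncard_le_ncard hSu (Set.toFinite u)
          omega
        obtain ⟨M, h1, h2, h3⟩ := ihd (d - 2) (by omega) hN (by omega) hT'
        exact ⟨M, h1, h2, by omega⟩
      case pos =>
        obtain ⟨S₀, hS₀mem, hmaxw⟩ :=
          Set.Finite.exists_maximalFor Set.ncard SS (Set.toFinite SS) hne
        have hS₀u : S₀ ⊆ u := hS₀mem.1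
        have hmax : ∀ S' ∈ SS, ¬ (S₀.ncard < S'.ncard) := by
          intro S' hS' hlt
          have := @hmaxw S' hS' hlt.le
          omega
        set s₀ : Set V := u \ S₀ with hs₀def
        have hcount : (oddComps G s₀).ncard = S₀.ncard + d := hS₀mem.2
        -- Claim A : every component of s₀ is odd
        have claimA : ∀ c, IsComp G s₀ c → Odd c.ncard := by
          intro c hc
          by_contra hodd
          obtain ⟨v, hv⟩ := hc.nonempty
          have hvs₀ : v ∈ s₀ := hc.subset hv
          have he1 : u \ (insert v S₀) = s₀ \ {v} := by
            ext x
            simp only [hs₀def, Set.mem_diff, Set.mem_insert_iff, Set.mem_singleton_iff]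
            tauto
          have hts : c \ {v} ⊆ s₀ \ {v} :=
            Set.diff_subset_diff_left hc.subset
          have hcl : ∀ a ∈ c \ {v}, ∀ b ∈ s₀ \ {v}, G.Adj a b → b ∈ c \ {v} := by
            intro a ha b hb hadj
            exact ⟨hc.closed a ha.1 b hb.1 hadj, hb.2⟩
          have hsplit1 := oddComps_split (G := G) hts hcl
          have he2 : (s₀ \ {v}) \ (c \ {v}) = s₀ \ c := by
            ext x
            simp only [Set.mem_diff, Set.mem_singleton_iff]
            by_cases hxv : x = v
            · subst hxv; simp [hv]
            · tauto
          rw [he2] at hsplit1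
          have hsplit2 := oddComps_split (G := G) hc.subset hc.closed
          have hgc : (oddComps G c).ncard = 0 := by
            rw [oddComps_ground_card hc, if_neg hodd]
          have hpar1 := oddComps_parity G (c \ {v})
          have hcard1 : (c \ {v}).ncard + 1 = c.ncard :=
            Set.ncard_diff_singleton_add_one hv (Set.toFinite c)
          have hceven : c.ncard % 2 = 0 := by
            rw [Nat.odd_iff] at hodd; omega
          have hcv1 : 1 ≤ (oddComps G (c \ {v})).ncard := by omega
          have hS₁u : insert v S₀ ⊆ u := Set.insert_subset hvs₀.1 hS₀u
          have hS₁card : (insert v S₀).ncard = S₀.ncard + 1 :=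
            Set.ncard_insert_of_notMem hvs₀.2 (Set.toFinite S₀)
          have hub := hT (insert v S₀) hS₁u
          rw [he1] at hub
          have hmem : insert v S₀ ∈ SS := by
            refine ⟨hS₁u, ?_⟩
            rw [he1]
            omega
          exact hmax _ hmem (by omega)
        -- the component family
        have hCFodd : {c | IsComp G s₀ c} = oddComps G s₀ := by
          ext c
          exact ⟨fun h => ⟨h, claimA c h⟩, fun h => h.1⟩
        have hCFcard : {c | IsComp G s₀ c}.ncard = S₀.ncard + d := by
          rw [hCFodd]; exact hcount
        -- Claim D : Tutte condition inside c minus a vertex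
        have claimD : ∀ c, IsComp G s₀ c → ∀ vcx ∈ c, ∀ S', S' ⊆ c \ {vcx} →
            (oddComps G ((c \ {vcx}) \ S')).ncard ≤ S'.ncard + 0 := by
          intro c hc vcx hvcx S' hS'
          by_contra hgt
          push_neg at hgt
          have hpar1 := oddComps_parity G ((c \ {vcx}) \ S')
          have hcard0 : (c \ {vcx}).ncard + 1 = c.ncard :=
            Set.ncard_diff_singleton_add_one hvcx (Set.toFinite c)
          have hcard1 : ((c \ {vcx}) \ S').ncard = (c \ {vcx}).ncard - S'.ncard :=
            Set.ncard_diff hS'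
          have hcard2 : S'.ncard ≤ (c \ {vcx}).ncard :=
            Set.ncard_le_ncard hS' (Set.toFinite _)
          have hcodd : c.ncard % 2 = 1 := Nat.odd_iff.mp (claimA c hc)
          have hge2 : S'.ncard + 2 ≤ (oddComps G ((c \ {vcx}) \ S')).ncard := by omega
          set S'' : Set V := S₀ ∪ insert vcx S' with hS''def
          have hS'c : S' ⊆ c := hS'.trans Set.diff_subset
          have hvccu : vcx ∈ u := (hc.subset hvcx).1
          have hS''u : S'' ⊆ u := by
            intro x hx
            rcases hx with hx | hx
            · exact hS₀u hx
            · rcases hx with rfl | hx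
              · exact hvccu
              · exact (hc.subset (hS'c hx)).1
          have hdisj : ∀ x ∈ insert vcx S', x ∉ S₀ := by
            intro x hx
            rcases hx with rfl | hx
            · exact (hc.subset hvcx).2
            · exact (hc.subset (hS'c hx)).2
          have hS''card : S''.ncard = S₀.ncard + 1 + S'.ncard := by
            rw [hS''def, Set.ncard_union_eq (by
              rw [Set.disjoint_right]; intro x hx; exact hdisj x hx)
              (Set.toFinite _) (Set.toFinite _),
              Set.ncard_insert_of_notMem (fun hx => (hS' hx).2 rfl) (Set.toFinite S')]
            omega
          have he : u \ S'' = s₀ \ insert vcx S' := by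
            ext x
            simp only [hS''def, hs₀def, Set.mem_diff, Set.mem_union, Set.mem_insert_iff]
            tauto
          have hteq : (c \ {vcx}) \ S' = c \ insert vcx S' := by
            ext x
            simp only [Set.mem_diff, Set.mem_singleton_iff, Set.mem_insert_iff]
            tauto
          have hts : c \ insert vcx S' ⊆ s₀ \ insert vcx S' :=
            Set.diff_subset_diff_left hc.subset
          have hcl : ∀ a ∈ c \ insert vcx S', ∀ b ∈ s₀ \ insert vcx S', G.Adj a b →
              b ∈ c \ insert vcx S' := by
            intro a ha b hb hadj
            exact ⟨hc.closed a ha.1 b hb.1 hadj, hb.2⟩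
          have hsplit1 := oddComps_split (G := G) hts hcl
          have he2 : (s₀ \ insert vcx S') \ (c \ insert vcx S') = s₀ \ c := by
            ext x
            constructor
            · rintro ⟨⟨hx1, hx2⟩, hx3⟩
              refine ⟨hx1, fun hxc => hx3 ⟨hxc, hx2⟩⟩
            · rintro ⟨hx1, hx2⟩
              have hxi : x ∉ insert vcx S' := by
                intro hx
                rcases hx with rfl | hx
                · exact hx2 hvcx
                · exact hx2 (hS'c hx)
              exact ⟨⟨hx1, hxi⟩, fun hc' => hx2 hc'.1⟩
          rw [he2] at hsplit1
          have hsplit2 := oddComps_split (G := G) hc.subset hc.closed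
          have hgc : (oddComps G c).ncard = 1 := by
            rw [oddComps_ground_card hc, if_pos (claimA c hc)]
          have hub := hT S'' hS''u
          rw [he, hsplit1, ← hteq] at hub
          have hmem : S'' ∈ SS := by
            refine ⟨hS''u, ?_⟩
            rw [he, hsplit1, ← hteq]
            omega
          exact hmax _ hmem (by omega)
        -- recursion into components
        have haveRec : ∀ c, IsComp G s₀ c → ∀ vcx ∈ c,
            ∃ M : G.Subgraph, M.IsMatching ∧ M.verts = c \ {vcx} := by
          intro c hc vcx hvcx
          have hcu : c ⊆ u := hc.subset.trans Set.diff_subset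
          have hc1 : 0 < c.ncard := by
            rw [Set.ncard_pos (Set.toFinite c)]; exact hc.nonempty
          have hcard0 : (c \ {vcx}).ncard + 1 = c.ncard :=
            Set.ncard_diff_singleton_add_one hvcx (Set.toFinite c)
          have hcard : (c \ {vcx}).ncard ≤ N := by
            have := Set.ncard_le_ncard hcu (Set.toFinite u)
            omega
          have hcodd : c.ncard % 2 = 1 := Nat.odd_iff.mp (claimA c hc)
          obtain ⟨M, h1, h2, h3⟩ := ih (c \ {vcx}) 0 hcard (by omega)
            (fun S' hS' => claimD c hc vcx hvcx S' hS')
          refine ⟨M, h1, Set.eq_of_subset_of_ncard_le h2 (by omega) (Set.toFinite _)⟩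
        -- Hall setup
        set CFin : Finset (Set V) := (Set.toFinite {c | IsComp G s₀ c}).toFinset with hCFin
        have hmemCFin : ∀ c : Set V, c ∈ CFin ↔ IsComp G s₀ c := by
          intro c; rw [hCFin, Set.Finite.mem_toFinset]; rfl
        have hCFincard : CFin.card = S₀.ncard + d := by
          rw [hCFin, ← Set.ncard_eq_toFinset_card _ (Set.toFinite _)]
          exact hCFcard
        set S₀fin : Finset V := (Set.toFinite S₀).toFinset with hS₀fin
        have hS₀fincard : S₀fin.card = S₀.ncard := by
          rw [hS₀fin, ← Set.ncard_eq_toFinset_card _ (Set.toFinite _)]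
        set nb : Set V → Finset V := fun c => S₀fin.filter (fun x => ∃ v ∈ c, G.Adj v x)
          with hnb
        -- Hall-type counting claim
        have claimC : ∀ A : Finset (Set V), (∀ c ∈ A, IsComp G s₀ c) →
            A.card ≤ (A.biUnion nb).card + d := by
          intro A hA
          set T : Set V := ↑(A.biUnion nb) with hTdef
          have hTS₀ : T ⊆ S₀ := by
            intro x hx
            rw [hTdef] at hx
            simp only [Finset.coe_biUnion, Set.mem_iUnion, Finset.mem_coe] at hx
            obtain ⟨cc, _, hx⟩ := hx
            rw [hnb] at hx
            simp only [Finset.mem_filter] at hx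
            rw [hS₀fin, Set.Finite.mem_toFinset] at hx
            exact hx.1
          have hTu : T ⊆ u := hTS₀.trans hS₀u
          have hkey : ∀ c ∈ A, c ∈ oddComps G (u \ T) := by
            intro c hcA
            have hc := hA c hcA
            refine ⟨?_, claimA c hc⟩
            refine hc.transfer ?_ ?_
            · intro x hx
              exact ⟨(hc.subset hx).1, fun hxT => (hc.subset hx).2 (hTS₀ hxT)⟩
            · intro a ha b hb hadj
              by_cases hbS₀ : b ∈ S₀
              · exfalso
                apply hb.2
                rw [hTdef]
                simp only [Finset.coe_biUnion, Set.mem_iUnion, Finset.mem_coe]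
                refine ⟨c, hcA, ?_⟩
                rw [hnb]
                simp only [Finset.mem_filter]
                exact ⟨by rw [hS₀fin, Set.Finite.mem_toFinset]; exact hbS₀, a, ha, hadj⟩
              · exact hc.closed a ha b ⟨hb.1, hbS₀⟩ hadj
          have hsub : (↑A : Set (Set V)) ⊆ oddComps G (u \ T) := fun c hc => hkey c hc
          have h1 : A.card ≤ (oddComps G (u \ T)).ncard := by
            rw [← Set.ncard_coe_finset A]
            exact Set.ncard_le_ncard hsub (Set.toFinite _)
          have h2 := hT T hTu
          have h3 : T.ncard = (A.biUnion nb).card := Set.ncard_coe_finset _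
          omega
        -- Hall's theorem with defect d, via dummy vertices
        let inlemb : V ↪ V ⊕ Fin d := ⟨Sum.inl, Sum.inl_injective⟩
        let inremb : Fin d ↪ V ⊕ Fin d := ⟨Sum.inr, Sum.inr_injective⟩
        set tfun : {c : Set V // c ∈ CFin} → Finset (V ⊕ Fin d) :=
          fun c => ((nb c.1).map inlemb) ∪ (Finset.univ.map inremb) with htfun
        have hall : ∀ s : Finset {c : Set V // c ∈ CFin}, s.card ≤ (s.biUnion tfun).card := by
          intro s
          rcases s.eq_empty_or_nonempty with rfl | hsne
          · simp
          · have hbU : s.biUnion tfun =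
                (((s.image Subtype.val).biUnion nb).map inlemb) ∪ (Finset.univ.map inremb) := by
              ext x
              simp only [Finset.mem_biUnion, htfun, Finset.mem_union, Finset.mem_map,
                Finset.mem_image]
              constructor
              · rintro ⟨c, hcs, hx | hx⟩
                · obtain ⟨y, hy, rfl⟩ := hx
                  exact Or.inl ⟨y, ⟨c.1, ⟨c, hcs, rfl⟩, hy⟩, rfl⟩
                · exact Or.inr hx
              · rintro (⟨y, ⟨cv, ⟨c, hcs, rfl⟩, hy2⟩, rfl⟩ | hx)
                · exact ⟨c, hcs, Or.inl ⟨y, hy2, rfl⟩⟩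
                · obtain ⟨c, hcs⟩ := hsne
                  exact ⟨c, hcs, Or.inr hx⟩
            have hdisj : Disjoint (((s.image Subtype.val).biUnion nb).map inlemb)
                ((Finset.univ : Finset (Fin d)).map inremb) := by
              rw [Finset.disjoint_left]
              rintro x hx hx'
              obtain ⟨y, _, rfl⟩ := Finset.mem_map.mp hx
              obtain ⟨z, _, hz⟩ := Finset.mem_map.mp hx'
              exact Sum.inl_ne_inr hz.symm
            have hcards : s.card = (s.image Subtype.val).card :=
              (Finset.card_image_of_injective s Subtype.val_injective).symm
            have hclaim := claimC (s.image Subtype.val) (by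
              intro c hc
              obtain ⟨c', _, rfl⟩ := Finset.mem_image.mp hc
              exact (hmemCFin c'.1).mp c'.2)
            rw [hbU, Finset.card_union_of_disjoint hdisj, Finset.card_map, Finset.card_map,
              Finset.card_univ, Fintype.card_fin]
            omega
        obtain ⟨F, hFinj, hFmem⟩ :=
          (Finset.all_card_le_biUnion_card_iff_exists_injective tfun).mp hall
        -- facts about F
        have hxS₀ : ∀ (c : {c : Set V // c ∈ CFin}) (x : V), F c = Sum.inl x →
            x ∈ S₀ ∧ ∃ v ∈ c.1, G.Adj v x := by
          intro c x hFc
          have := hFmem c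
          rw [hFc, htfun] at this
          simp only [Finset.mem_union, Finset.mem_map] at this
          rcases this with ⟨y, hy, hyx⟩ | ⟨y, _, hyx⟩
          · have hxy : y = x := Sum.inl_injective hyx
            subst hxy
            rw [hnb] at hy
            simp only [Finset.mem_filter] at hy
            rw [hS₀fin, Set.Finite.mem_toFinset] at hy
            exact ⟨hy.1, hy.2⟩
          · exact absurd hyx (by simp [inremb])
        -- choose vertices and matchings per component
        have hcOf : ∀ c : {c : Set V // c ∈ CFin}, IsComp G s₀ c.1 :=
          fun c => (hmemCFin c.1).mp c.2
        have hchoice : ∀ c : {c : Set V // c ∈ CFin}, ∃ (vcx : V) (M : G.Subgraph),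
            vcx ∈ c.1 ∧ M.IsMatching ∧ M.verts = c.1 \ {vcx} ∧
            (∀ x, F c = Sum.inl x → G.Adj vcx x) := by
          intro c
          have hc := hcOf c
          cases hFc : F c with
          | inl x =>
              obtain ⟨hxS, v, hvcm, hadj⟩ := hxS₀ c x hFc
              obtain ⟨M, hM1, hM2⟩ := haveRec c.1 hc v hvcm
              refine ⟨v, M, hvcm, hM1, hM2, ?_⟩
              intro x' hx'
              obtain rfl : x = x' := Sum.inl_injective hx'
              exact hadj
          | inr y =>
              obtain ⟨v, hvcm⟩ := hc.nonempty
              obtain ⟨M, hM1, hM2⟩ := haveRec c.1 hc v hvcm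
              refine ⟨v, M, hvcm, hM1, hM2, ?_⟩
              intro x' hx'
              exact absurd hx' (by simp)
        choose vc Mc hvc hMc hMverts hadjF using hchoice
        set edgeOf : {c : Set V // c ∈ CFin} → G.Subgraph := fun c =>
          if h : ∃ x, F c = Sum.inl x then G.subgraphOfAdj (hadjF c h.choose h.choose_spec)
          else ⊥ with hedgeOf
        set m : {c : Set V // c ∈ CFin} → G.Subgraph := fun c => Mc c ⊔ edgeOf c with hm
        -- membership characterization of (m c).verts
        have hm_mem : ∀ c, ∀ x, x ∈ (m c).verts →
            x ∈ c.1 ∨ ∃ y, F c = Sum.inl y ∧ x = y ∧ y ∈ S₀ := by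
          intro c x hx
          simp only [hm] at hx
          simp only [Subgraph.verts_sup, Set.mem_union] at hx
          rcases hx with hx | hx
          · left
            rw [hMverts c] at hx
            exact hx.1
          · simp only [hedgeOf] at hx
            by_cases h : ∃ y, F c = Sum.inl y
            · rw [dif_pos h] at hx
              simp only [subgraphOfAdj_verts, Set.mem_insert_iff, Set.mem_singleton_iff] at hx
              rcases hx with rfl | rfl
              · left; exact hvc c
              · right; exact ⟨h.choose, h.choose_spec, rfl, (hxS₀ c _ h.choose_spec).1⟩
            · rw [dif_neg h] at hx
              simp only [Subgraph.verts_bot, Set.mem_empty_iff_false] at hx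
        have hm_match : ∀ c, (m c).IsMatching := by
          intro c
          simp only [hm, hedgeOf]
          by_cases h : ∃ y, F c = Sum.inl y
          · rw [dif_pos h]
            have hedgematch := Subgraph.IsMatching.subgraphOfAdj (hadjF c h.choose h.choose_spec)
            apply (hMc c).sup hedgematch
            rw [(hMc c).support_eq_verts, hedgematch.support_eq_verts, hMverts c,
              subgraphOfAdj_verts]
            rw [Set.disjoint_left]
            intro a ha hamem
            simp only [Set.mem_insert_iff, Set.mem_singleton_iff] at hamem
            rcases hamem with rfl | rfl
            · exact ha.2 rfl
            · exact ((hcOf c).subset ha.1).2 ((hxS₀ c _ h.choose_spec).1)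
          · rw [dif_neg h, sup_bot_eq]
            exact hMc c
        have hm_pair : Pairwise fun c c' => Disjoint (m c).support (m c').support := by
          intro c c' hcc'
          have hsub1 := Subgraph.support_subset_verts (m c)
          have hsub2 := Subgraph.support_subset_verts (m c')
          refine Set.disjoint_of_subset hsub1 hsub2 ?_
          rw [Set.disjoint_left]
          intro x hx hx'
          have hd1 := hm_mem c x hx
          have hd2 := hm_mem c' x hx'
          have hcne : c.1 ≠ c'.1 := fun h => hcc' (Subtype.ext h)
          rcases hd1 with hx1 | ⟨y, hy1, rfl, hyS⟩
          · rcases hd2 with hx2 | ⟨y', hy1', rfl, hyS'⟩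
            · rcases (hcOf c).eq_or_disjoint (hcOf c') with he | hdis
              · exact hcne he
              · exact hdis.ne_of_mem hx1 hx2 rfl
            · exact ((hcOf c).subset hx1).2 hyS'
          · rcases hd2 with hx2 | ⟨y', hy1', heq, hyS'⟩
            · exact ((hcOf c').subset hx2).2 hyS
            · apply hcc'
              apply hFinj
              rw [hy1, hy1', heq]
        set Mbig : G.Subgraph := ⨆ c, m c with hMbigdef
        have hMmatch : Mbig.IsMatching := Subgraph.IsMatching.iSup hm_match hm_pair
        have hMbigverts : Mbig.verts = ⋃ c, (m c).verts := Subgraph.verts_iSup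
        have hMsub : Mbig.verts ⊆ u := by
          rw [hMbigverts]
          intro x hx
          obtain ⟨c, hc⟩ := Set.mem_iUnion.mp hx
          rcases hm_mem c x hc with hx1 | ⟨y, _, rfl, hyS⟩
          · exact ((hcOf c).subset hx1).1
          · exact hS₀u hyS
        -- bad components (left unmatched to S₀)
        have hCbad : ({c : {c : Set V // c ∈ CFin} | ∀ x, F c ≠ Sum.inl x}).ncard ≤ d := by
          set Cb := {c : {c : Set V // c ∈ CFin} | ∀ x, F c ≠ Sum.inl x} with hCb
          have h1 : (F '' Cb).ncard = Cb.ncard := Set.ncard_image_of_injective _ hFinj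
          have h2 : F '' Cb ⊆ (Sum.inr : Fin d → V ⊕ Fin d) '' (Set.univ : Set (Fin d)) := by
            rintro z ⟨cb, hcb, rfl⟩
            cases hz : F cb with
            | inl x => exact absurd hz (hcb x)
            | inr y => exact ⟨y, trivial, rfl⟩
          have h3 : ((Sum.inr : Fin d → V ⊕ Fin d) '' (Set.univ : Set (Fin d))).ncard = d := by
            rw [Set.ncard_image_of_injective _ Sum.inr_injective, Set.ncard_univ,
              Nat.card_eq_fintype_card, Fintype.card_fin]
          have h4 := Set.ncard_le_ncard h2 (Set.toFinite _)
          omega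
        have hι : Fintype.card {c : Set V // c ∈ CFin} = S₀.ncard + d := by
          rw [Fintype.card_coe]
          exact hCFincard
        have hsurj : ∀ x ∈ S₀, ∃ c, F c = Sum.inl x := by
          set Agood : Finset {c : Set V // c ∈ CFin} :=
            Finset.univ.filter (fun c => ∃ y, F c = Sum.inl y) with hAgood
          set Abad : Finset {c : Set V // c ∈ CFin} :=
            Finset.univ.filter (fun c => ¬ ∃ y, F c = Sum.inl y) with hAbaddef
          have hAbad : Abad.card ≤ d := by
            have hcoe : (↑Abad : Set {c : Set V // c ∈ CFin}) =
                {c : {c : Set V // c ∈ CFin} | ∀ x, F c ≠ Sum.inl x} := by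
              ext c
              simp [hAbaddef, not_exists]
            have h5 : Abad.card = ({c : {c : Set V // c ∈ CFin} | ∀ x, F c ≠ Sum.inl x}).ncard := by
              rw [← hcoe]
              exact (Set.ncard_coe_finset _).symm
            omega
          have hgoodcard : S₀.ncard ≤ Agood.card := by
            have h6 : Agood.card + Abad.card = Fintype.card {c : Set V // c ∈ CFin} := by
              rw [hAgood, hAbaddef, ← Finset.card_univ]
              exact Finset.card_filter_add_card_filter_not (p := fun c => ∃ y, F c = Sum.inl y)
            rw [hι] at h6
            omega
          set τ : {c : Set V // c ∈ CFin} → V := fun c =>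
            if h : ∃ y, F c = Sum.inl y then h.choose else vc c with hτ
          have himgsub : Agood.image τ ⊆ S₀fin := by
            intro x hx
            obtain ⟨c, hcA, rfl⟩ := Finset.mem_image.mp hx
            rw [hAgood] at hcA
            have h := (Finset.mem_filter.mp hcA).2
            rw [hτ]
            simp only [dif_pos h]
            rw [hS₀fin, Set.Finite.mem_toFinset]
            exact (hxS₀ c _ h.choose_spec).1
          have hinj : Set.InjOn τ ↑Agood := by
            intro a ha b hb hab
            have hA1 := (Finset.mem_filter.mp (Finset.mem_coe.mp ha)).2
            have hA2 := (Finset.mem_filter.mp (Finset.mem_coe.mp hb)).2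
            have hFa : F a = Sum.inl (τ a) := by
              rw [hτ]; simp only [dif_pos hA1]; exact hA1.choose_spec
            have hFb : F b = Sum.inl (τ b) := by
              rw [hτ]; simp only [dif_pos hA2]; exact hA2.choose_spec
            apply hFinj
            rw [hFa, hFb, hab]
          have himgcard : (Agood.image τ).card = Agood.card := Finset.card_image_of_injOn hinj
          have himg : Agood.image τ = S₀fin := by
            apply Finset.eq_of_subset_of_card_le himgsub
            omega
          intro x hxS
          have hxfin : x ∈ S₀fin := by
            rw [hS₀fin, Set.Finite.mem_toFinset]; exact hxS
          rw [← himg] at hxfin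
          obtain ⟨c, hcA, hcx⟩ := Finset.mem_image.mp hxfin
          rw [hAgood] at hcA
          have hA := (Finset.mem_filter.mp hcA).2
          refine ⟨c, ?_⟩
          rw [← hcx, hτ]
          simp only [dif_pos hA]
          exact hA.choose_spec
        set B : Set V := (fun c => vc c) '' {c | ∀ x, F c ≠ Sum.inl x} with hB
        have hBcard : B.ncard ≤ d :=
          le_trans (Set.ncard_image_le (Set.toFinite _)) hCbad
        have hcover : u \ B ⊆ Mbig.verts := by
          rintro x ⟨hxu, hxB⟩
          rw [hMbigverts]
          by_cases hxS : x ∈ S₀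
          · obtain ⟨c, hFc⟩ := hsurj x hxS
            refine Set.mem_iUnion.mpr ⟨c, ?_⟩
            have hex : ∃ y, F c = Sum.inl y := ⟨x, hFc⟩
            have hxeq : hex.choose = x := Sum.inl_injective (hex.choose_spec.symm.trans hFc)
            simp only [hm, Subgraph.verts_sup, Set.mem_union]
            right
            simp only [hedgeOf]
            rw [dif_pos hex]
            simp only [subgraphOfAdj_verts, Set.mem_insert_iff, Set.mem_singleton_iff]
            right
            exact hxeq.symm
          · have hxs₀ : x ∈ s₀ := ⟨hxu, hxS⟩
            have hcc : IsComp G s₀ (comp G s₀ x) := ⟨x, hxs₀, rfl⟩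
            set chat : {c : Set V // c ∈ CFin} := ⟨comp G s₀ x, (hmemCFin _).mpr hcc⟩ with hchat
            have hxchat : x ∈ chat.1 := mem_comp_self G s₀ x
            by_cases hxv : x = vc chat
            · by_cases hA : ∃ y, F chat = Sum.inl y
              · refine Set.mem_iUnion.mpr ⟨chat, ?_⟩
                simp only [hm, Subgraph.verts_sup, Set.mem_union]
                right
                simp only [hedgeOf]
                rw [dif_pos hA]
                simp only [subgraphOfAdj_verts, Set.mem_insert_iff, Set.mem_singleton_iff]
                left
                exact hxv
              · exfalso
                apply hxB
                rw [hB]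
                exact ⟨chat, fun y hy => hA ⟨y, hy⟩, hxv.symm⟩
            · refine Set.mem_iUnion.mpr ⟨chat, ?_⟩
              simp only [hm, Subgraph.verts_sup, Set.mem_union]
              left
              rw [hMverts chat]
              exact ⟨hxchat, hxv⟩
        refine ⟨Mbig, hMmatch, hMsub, ?_⟩
        have h1 : u ⊆ (u \ B) ∪ B := by
          intro x hx
          by_cases hxB : x ∈ B
          · exact Or.inr hxB
          · exact Or.inl ⟨hx, hxB⟩
        have h2 : u.ncard ≤ (u \ B).ncard + B.ncard :=
          le_trans (Set.ncard_le_ncard h1 (Set.toFinite _)) (Set.ncard_union_le _ _)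
        have h3 : (u \ B).ncard ≤ Mbig.verts.ncard :=
          Set.ncard_le_ncard hcover (Set.toFinite _)
        omega

end Main

section Cycle

lemma start_edge {a b x : V} (p : G.Walk a b) (hp : p.IsPath) (hx : s(a,x) ∈ p.edges) :
    x = p.getVert 1 := by
  cases p with
  | nil => simp at hx
  | @cons _ u _ h q =>
      rw [Walk.edges_cons, List.mem_cons] at hx
      rcases hx with hx | hx
      · rw [Sym2.eq_iff] at hx
        rcases hx with ⟨-, rfl⟩ | ⟨rfl, rfl⟩
        · simp [Walk.getVert_cons_succ, Walk.getVert_zero]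
        · simp [Walk.getVert_cons_succ, Walk.getVert_zero]
      · exfalso
        have := Walk.fst_mem_support_of_mem_edges q hx
        exact ((Walk.cons_isPath_iff _ _).mp hp).2 this

lemma exists_cycle_in [Fintype V] {c : Set V} (hne : c.Nonempty)
    (hdeg : ∀ v ∈ c, 2 ≤ ({w | G.Adj v w ∧ w ∈ c}).ncard) :
    ∃ (a : V) (w : G.Walk a a), w.IsCycle ∧ ∀ x ∈ w.support, x ∈ c := by
  classical
  have aux : ∀ (k : ℕ) (a b : V) (p : G.Walk a b), p.IsPath → (∀ x ∈ p.support, x ∈ c) →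
      Fintype.card V ≤ p.length + k →
      ∃ (a' : V) (w : G.Walk a' a'), w.IsCycle ∧ ∀ x ∈ w.support, x ∈ c := by
    intro k
    induction k with
    | zero =>
        intro a b p hp hsup hlen
        exact absurd hp.length_lt (by omega)
    | succ k ih =>
        intro a b p hp hsup hlen
        have hac : a ∈ c := hsup a p.start_mem_support
        have h2 : 1 < ({w | G.Adj a w ∧ w ∈ c}).ncard := lt_of_lt_of_le one_lt_two (hdeg a hac)
        obtain ⟨w, hw, hwne⟩ := Set.exists_ne_of_one_lt_ncard h2 (p.getVert 1)
        by_cases hws : w ∈ p.support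
        · refine ⟨w, Walk.cons hw.1.symm (p.takeUntil w hws), ?_, ?_⟩
          · rw [Walk.cons_isCycle_iff]
            refine ⟨hp.takeUntil hws, fun hmem => ?_⟩
            have h3 := Walk.edges_takeUntil_subset p hws hmem
            have hx : s(a,w) ∈ p.edges := by rwa [Sym2.eq_swap] at h3
            exact hwne (start_edge p hp hx)
          · intro x hx
            rw [Walk.support_cons] at hx
            rcases List.mem_cons.mp hx with rfl | hx
            · exact hw.2
            · exact hsup x (Walk.support_takeUntil_subset p hws hx)
        · refine ih w b (Walk.cons hw.1.symm p) (hp.cons hws) ?_ (by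
            rw [Walk.length_cons]; omega)
          intro x hx
          rw [Walk.support_cons] at hx
          rcases List.mem_cons.mp hx with rfl | hx
          · exact hw.2
          · exact hsup x hx
  obtain ⟨a, ha⟩ := hne
  exact aux (Fintype.card V) a a Walk.nil Walk.IsPath.nil (by
    intro x hx
    rw [Walk.support_nil, List.mem_singleton] at hx
    exact hx ▸ ha) (by simp)

lemma comp_large [Fintype V] {g : ℕ} (hgirth : (g : ℕ∞) ≤ G.egirth) {c : Set V}
    (hne : c.Nonempty) (hdeg : ∀ v ∈ c, 2 ≤ ({w | G.Adj v w ∧ w ∈ c}).ncard) :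
    g ≤ c.ncard := by
  classical
  obtain ⟨a, w, hcyc, hsup⟩ := exists_cycle_in hne hdeg
  have h1 : (g : ℕ∞) ≤ w.length := (le_egirth.mp hgirth) a w hcyc
  have h2 : g ≤ w.length := by exact_mod_cast h1
  have h3 : w.length ≤ c.ncard := by
    have hn : w.support.tail.Nodup := hcyc.support_nodup
    have hlen : w.support.tail.length = w.length := by
      have := Walk.length_support w
      have h4 := congrArg List.length (Walk.support_eq_cons w)
      simp only [List.length_cons] at h4
      omega
    have h5 : w.support.tail.toFinset.card = w.length := by
      rw [List.toFinset_card_of_nodup hn, hlen]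
    have h6 : (↑w.support.tail.toFinset : Set V) ⊆ c := by
      intro x hx
      rw [Finset.mem_coe, List.mem_toFinset] at hx
      exact hsup x (List.mem_of_mem_tail hx)
    calc w.length = (↑w.support.tail.toFinset : Set V).ncard := by
          rw [Set.ncard_coe_finset]; omega
      _ ≤ c.ncard := Set.ncard_le_ncard h6 (Set.toFinite c)
  omega

end Cycle

section CountBound
open Finset

lemma sum_ncard_le [Fintype V] (A : Finset (Set V))
    (hdisj : ∀ c ∈ A, ∀ c' ∈ A, c ≠ c' → Disjoint c c') :
    ∑ c ∈ A, c.ncard ≤ Fintype.card V := by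
  classical
  have h1 : ∀ c ∈ A, c.ncard = (Set.toFinite c).toFinset.card := by
    intro c _
    exact Set.ncard_eq_toFinset_card c (Set.toFinite c)
  rw [Finset.sum_congr rfl h1]
  rw [← Finset.card_biUnion (by
    intro x hx y hy hxy
    show Disjoint _ _
    rw [Finset.disjoint_left]
    intro a ha ha'
    rw [Set.Finite.mem_toFinset] at ha ha'
    exact (hdisj x hx y hy hxy).ne_of_mem ha ha' rfl)]
  exact Finset.card_le_univ _

-- evenness of adjacency pairs within a set
lemma adjpairs_even [Fintype V] [DecidableEq V] (G : SimpleGraph V) [DecidableRel G.Adj]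
    (cfin : Finset V) :
    ((cfin ×ˢ cfin).filter (fun p => G.Adj p.1 p.2)).card % 2 = 0 := by
  classical
  set R := (cfin ×ˢ cfin).filter (fun p => G.Adj p.1 p.2) with hR
  let e := (Fintype.equivFin V)
  set f : V → ℕ := fun v => (e v : ℕ) with hf
  have hfinj : Function.Injective f := fun a b h => e.injective (Fin.ext h)
  set R1 := R.filter (fun p => f p.1 < f p.2) with hR1
  set R2 := R.filter (fun p => ¬ f p.1 < f p.2) with hR2
  have hsplit : R1.card + R2.card = R.card :=
    Finset.card_filter_add_card_filter_not _
  have hbij : R1.card = R2.card := by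
    apply Finset.card_bij (fun p _ => (p.2, p.1))
    · rintro ⟨x, y⟩ hxy
      simp only [hR1, hR2, hR, Finset.mem_filter, Finset.mem_product] at hxy ⊢
      refine ⟨⟨⟨hxy.1.1.2, hxy.1.1.1⟩, hxy.1.2.symm⟩, ?_⟩
      omega
    · rintro ⟨x, y⟩ hxy ⟨x', y'⟩ hxy' h
      simp only [Prod.mk.injEq] at h
      exact Prod.ext h.2 h.1
    · rintro ⟨x, y⟩ hxy
      refine ⟨(y, x), ?_, rfl⟩
      simp only [hR1, hR2, hR, Finset.mem_filter, Finset.mem_product] at hxy ⊢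
      have hne : f x ≠ f y := fun h => hxy.1.2.ne (hfinj h)
      refine ⟨⟨⟨hxy.1.1.2, hxy.1.1.1⟩, hxy.1.2.symm⟩, by omega⟩
  omega


lemma count_bound [Fintype V] (G : SimpleGraph V) [DecidableRel G.Adj] (g : ℕ)
    (hcubic : ∀ v : V, G.degree v = 3) (hgirth : (g : ℕ∞) ≤ G.egirth) (S : Set V) :
    g * (oddComps G (Set.univ \ S)).ncard ≤ g * S.ncard + Fintype.card V := by
  classical
  set s : Set V := Set.univ \ S with hs
  set Ofin : Finset (Set V) := (Set.toFinite (oddComps G s)).toFinset with hOfin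
  have hOmem : ∀ c : Set V, c ∈ Ofin ↔ (IsComp G s c ∧ Odd c.ncard) := by
    intro c
    rw [hOfin, Set.Finite.mem_toFinset]
    rfl
  have hOcard : (oddComps G s).ncard = Ofin.card := by
    rw [hOfin]
    exact Set.ncard_eq_toFinset_card _ (Set.toFinite _)
  set Sfin : Finset V := (Set.toFinite S).toFinset with hSfin
  have hScard : Sfin.card = S.ncard := by
    rw [hSfin]
    exact (Set.ncard_eq_toFinset_card _ (Set.toFinite _)).symm
  set E : Set V → Finset (V × V) := fun c =>
    (((Set.toFinite c).toFinset ×ˢ Sfin).filter (fun p => G.Adj p.1 p.2)) with hE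
  have hmemcfin : ∀ (c : Set V) (x : V), x ∈ (Set.toFinite c).toFinset ↔ x ∈ c :=
    fun c x => Set.Finite.mem_toFinset _
  have hcfincard : ∀ c : Set V, ((Set.toFinite c).toFinset).card = c.ncard :=
    fun c => (Set.ncard_eq_toFinset_card _ _).symm
  -- degree splitting for vertices of a component
  have hsplitdeg : ∀ c, IsComp G s c → ∀ v ∈ (Set.toFinite c).toFinset,
      ((G.neighborFinset v) ∩ Sfin).card
      + ((G.neighborFinset v) ∩ (Set.toFinite c).toFinset).card = 3 := by
    intro c hc v hv
    set cfin := (Set.toFinite c).toFinset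
    have hdisj : Disjoint ((G.neighborFinset v) ∩ Sfin) ((G.neighborFinset v) ∩ cfin) := by
      rw [Finset.disjoint_left]
      intro a ha ha'
      have h1 : a ∈ S := by
        have := (Finset.mem_inter.mp ha).2
        rwa [hSfin, Set.Finite.mem_toFinset] at this
      have h2 : a ∈ c := (hmemcfin c a).mp (Finset.mem_inter.mp ha').2
      exact (hc.subset h2).2 h1
    have hunion : (G.neighborFinset v) ∩ Sfin ∪ (G.neighborFinset v) ∩ cfin
        = G.neighborFinset v := by
      ext w
      simp only [Finset.mem_union, Finset.mem_inter, mem_neighborFinset]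
      constructor
      · rintro (⟨h1, _⟩ | ⟨h1, _⟩) <;> exact h1
      · intro hw
        by_cases hwS : w ∈ S
        · exact Or.inl ⟨hw, by rwa [hSfin, Set.Finite.mem_toFinset]⟩
        · right
          refine ⟨hw, (hmemcfin c w).mpr ?_⟩
          exact hc.closed v ((hmemcfin c v).mp hv) w ⟨trivial, hwS⟩ hw
    rw [← Finset.card_union_of_disjoint hdisj, hunion]
    exact hcubic v
  -- boundary count as a sum
  have hEc : ∀ c : Set V, (E c).card
      = ∑ v ∈ (Set.toFinite c).toFinset, ((G.neighborFinset v) ∩ Sfin).card := by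
    intro c
    set cfin := (Set.toFinite c).toFinset
    rw [hE]
    rw [Finset.card_eq_sum_card_fiberwise (f := Prod.fst) (t := cfin) (by
      rintro ⟨x, y⟩ hxy
      exact (Finset.mem_product.mp (Finset.mem_filter.mp hxy).1).1)]
    apply Finset.sum_congr rfl
    intro v hv
    apply Finset.card_bij (fun p _ => p.2)
    · rintro ⟨x, y⟩ hxy
      simp only [Finset.mem_filter, Finset.mem_product] at hxy
      obtain ⟨⟨⟨hx1, hy1⟩, hadj⟩, hx2⟩ := hxy
      subst hx2
      exact Finset.mem_inter.mpr ⟨(mem_neighborFinset G _ _).mpr hadj, hy1⟩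
    · rintro ⟨x, y⟩ hxy ⟨x', y'⟩ hxy' h
      simp only [Finset.mem_filter] at hxy hxy'
      simp only at h
      rw [Prod.ext_iff]
      exact ⟨hxy.2.trans hxy'.2.symm, h⟩
    · intro w hw
      refine ⟨(v, w), ?_, rfl⟩
      simp only [Finset.mem_filter, Finset.mem_product]
      obtain ⟨hw1, hw2⟩ := Finset.mem_inter.mp hw
      exact ⟨⟨⟨hv, hw2⟩, (mem_neighborFinset G _ _).mp hw1⟩, trivial⟩
  -- parity of the boundary count
  have hbnd_parity : ∀ c, IsComp G s c → (E c).card % 2 = c.ncard % 2 := by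
    intro c hc
    set cfin := (Set.toFinite c).toFinset with hcfin
    have hIc : ∑ v ∈ cfin, ((G.neighborFinset v) ∩ cfin).card
        = ((cfin ×ˢ cfin).filter (fun p => G.Adj p.1 p.2)).card := by
      rw [Finset.card_eq_sum_card_fiberwise (f := Prod.fst) (t := cfin) (by
        rintro ⟨x, y⟩ hxy
        exact (Finset.mem_product.mp (Finset.mem_filter.mp hxy).1).1)]
      apply Finset.sum_congr rfl
      intro v hv
      apply Finset.card_bij (fun w _ => (v, w))
      · intro w hw
        simp only [Finset.mem_filter, Finset.mem_product]
        obtain ⟨hw1, hw2⟩ := Finset.mem_inter.mp hw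
        exact ⟨⟨⟨hv, hw2⟩, (mem_neighborFinset G _ _).mp hw1⟩, trivial⟩
      · intro w hw w' hw' h
        simp only [Prod.mk.injEq] at h
        exact h.2
      · rintro ⟨x, y⟩ hxy
        simp only [Finset.mem_filter, Finset.mem_product] at hxy
        obtain ⟨⟨⟨hx1, hy1⟩, hadj⟩, hx2⟩ := hxy
        subst hx2
        exact ⟨y, Finset.mem_inter.mpr ⟨(mem_neighborFinset G _ _).mpr hadj, hy1⟩, rfl⟩
    have heven := adjpairs_even G cfin
    have hsum : ∑ v ∈ cfin, (((G.neighborFinset v) ∩ Sfin).card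
        + ((G.neighborFinset v) ∩ cfin).card) = 3 * cfin.card := by
      rw [Finset.sum_congr rfl (hsplitdeg c hc), Finset.sum_const, smul_eq_mul, mul_comm]
    rw [Finset.sum_add_distrib] at hsum
    have h1 := hEc c
    have h2 := hcfincard c
    rw [hcfin] at hIc heven hsum
    omega
  -- split odd components into large and small
  set P : Finset (Set V) := Ofin.filter (fun c => g ≤ c.ncard) with hP
  set Q : Finset (Set V) := Ofin.filter (fun c => ¬ g ≤ c.ncard) with hQ
  have hPQ : P.card + Q.card = Ofin.card :=
    Finset.card_filter_add_card_filter_not _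
  -- large components occupy at least g vertices each
  have hPbound : g * P.card ≤ Fintype.card V := by
    have h1 : g * P.card = ∑ _c ∈ P, g := by
      rw [Finset.sum_const, smul_eq_mul, mul_comm]
    have h2 : ∑ _c ∈ P, g ≤ ∑ c ∈ P, c.ncard := by
      apply Finset.sum_le_sum
      intro c hcP
      exact (Finset.mem_filter.mp hcP).2
    have h3 : ∑ c ∈ P, c.ncard ≤ Fintype.card V := by
      apply sum_ncard_le
      intro c hc c' hc' hne
      have h4 := (hOmem c).mp (Finset.mem_filter.mp hc).1
      have h5 := (hOmem c').mp (Finset.mem_filter.mp hc').1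
      rcases h4.1.eq_or_disjoint h5.1 with h | h
      · exact absurd h hne
      · exact h
    omega
  -- small components have at least 3 boundary edges
  have hQ3 : ∀ c ∈ Q, 3 ≤ (E c).card := by
    intro c hcQ
    have hcO := (hOmem c).mp (Finset.mem_filter.mp hcQ).1
    have hsmall := (Finset.mem_filter.mp hcQ).2
    have hpar := hbnd_parity c hcO.1
    have hodd : c.ncard % 2 = 1 := Nat.odd_iff.mp hcO.2
    by_contra hlt
    push_neg at hlt
    have hE1 : (E c).card = 1 := by omega
    have hdeg : ∀ v ∈ c, 2 ≤ ({w | G.Adj v w ∧ w ∈ c}).ncard := by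
      intro v hv
      have hvfin : v ∈ (Set.toFinite c).toFinset := (hmemcfin c v).mpr hv
      have h1 : ((G.neighborFinset v) ∩ Sfin).card ≤ 1 := by
        have h2 : ((G.neighborFinset v) ∩ Sfin).card
            ≤ ∑ v ∈ (Set.toFinite c).toFinset, ((G.neighborFinset v) ∩ Sfin).card :=
          Finset.single_le_sum (f := fun w => ((G.neighborFinset w) ∩ Sfin).card)
            (fun i _ => Nat.zero_le _) hvfin
        rw [← hEc c] at h2
        omega
      have h3 := hsplitdeg c hcO.1 v hvfin
      have h4 : ({w | G.Adj v w ∧ w ∈ c})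
          = ↑((G.neighborFinset v) ∩ (Set.toFinite c).toFinset) := by
        ext w
        simp only [Set.mem_setOf_eq, Finset.coe_inter, Set.mem_inter_iff, Finset.mem_coe]
        constructor
        · rintro ⟨h5, h6⟩
          exact ⟨(mem_neighborFinset G _ _).mpr h5, (hmemcfin c w).mpr h6⟩
        · rintro ⟨h5, h6⟩
          exact ⟨(mem_neighborFinset G _ _).mp h5, (hmemcfin c w).mp h6⟩
      rw [h4, Set.ncard_coe_finset]
      omega
    have := comp_large hgirth hcO.1.nonempty hdeg
    omega
  -- total boundary bound
  have htot : ∑ c ∈ Q, (E c).card ≤ 3 * S.ncard := by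
    have hdisjE : ∀ c ∈ Q, ∀ c' ∈ Q, c ≠ c' → Disjoint (E c) (E c') := by
      intro c hc c' hc' hne
      rw [Finset.disjoint_left]
      rintro ⟨x, y⟩ hx hx'
      have h1 : x ∈ c := by
        have := (Finset.mem_product.mp (Finset.mem_filter.mp hx).1).1
        exact (hmemcfin c x).mp this
      have h1' : x ∈ c' := by
        have := (Finset.mem_product.mp (Finset.mem_filter.mp hx').1).1
        exact (hmemcfin c' x).mp this
      have h4 := (hOmem c).mp (Finset.mem_filter.mp hc).1
      have h5 := (hOmem c').mp (Finset.mem_filter.mp hc').1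
      rcases h4.1.eq_or_disjoint h5.1 with h | h
      · exact hne h
      · exact h.ne_of_mem h1 h1' rfl
    have h2 : ∑ c ∈ Q, (E c).card = (Q.biUnion E).card :=
      (Finset.card_biUnion (fun c hc c' hc' hne => hdisjE c hc c' hc' hne)).symm
    have h3 : Q.biUnion E ⊆ (Finset.univ ×ˢ Sfin).filter (fun p => G.Adj p.1 p.2) := by
      intro p hp
      obtain ⟨c, hcQ, hpE⟩ := Finset.mem_biUnion.mp hp
      rw [hE] at hpE
      simp only [Finset.mem_filter, Finset.mem_product] at hpE ⊢
      exact ⟨⟨Finset.mem_univ _, hpE.1.2⟩, hpE.2⟩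
    have h4 : ((Finset.univ ×ˢ Sfin).filter (fun p => G.Adj p.1 p.2)).card
        = 3 * Sfin.card := by
      rw [Finset.card_eq_sum_card_fiberwise (f := Prod.snd) (t := Sfin)
        (fun p hp => (Finset.mem_product.mp (Finset.mem_filter.mp hp).1).2)]
      have hfib : ∀ x ∈ Sfin,
          (((Finset.univ ×ˢ Sfin).filter (fun p => G.Adj p.1 p.2)).filter
            (fun p => p.2 = x)).card = 3 := by
        intro x hx
        have hbij : (((Finset.univ ×ˢ Sfin).filter (fun p => G.Adj p.1 p.2)).filter
            (fun p => p.2 = x)).card = (G.neighborFinset x).card := by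
          apply Finset.card_bij (fun p _ => p.1)
          · rintro ⟨a, b⟩ hab
            simp only [Finset.mem_filter, Finset.mem_product] at hab
            obtain ⟨⟨_, hadj⟩, hb⟩ := hab
            subst hb
            exact (mem_neighborFinset G _ _).mpr hadj.symm
          · rintro ⟨a, b⟩ hab ⟨a', b'⟩ hab' h
            simp only [Finset.mem_filter] at hab hab'
            simp only at h
            rw [Prod.ext_iff]
            exact ⟨h, hab.2.trans hab'.2.symm⟩
          · intro w hw
            refine ⟨(w, x), ?_, rfl⟩
            simp only [Finset.mem_filter, Finset.mem_product]
            exact ⟨⟨⟨Finset.mem_univ _, hx⟩, ((mem_neighborFinset G _ _).mp hw).symm⟩, trivial⟩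
        rw [hbij]
        exact hcubic x
      rw [Finset.sum_congr rfl hfib, Finset.sum_const, smul_eq_mul, mul_comm]
    have h5 := Finset.card_le_card h3
    rw [hScard] at h4
    omega
  have hQcard : 3 * Q.card ≤ 3 * S.ncard := by
    have h1 : 3 * Q.card = ∑ _c ∈ Q, 3 := by
      rw [Finset.sum_const, smul_eq_mul, mul_comm]
    have h2 : ∑ _c ∈ Q, 3 ≤ ∑ c ∈ Q, (E c).card := Finset.sum_le_sum hQ3
    omega
  have hfinal : (oddComps G s).ncard = P.card + Q.card := by omega
  have hgQ : g * Q.card ≤ g * S.ncard := Nat.mul_le_mul_left g (by omega)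
  calc g * (oddComps G s).ncard = g * P.card + g * Q.card := by
        rw [hfinal]; ring
    _ ≤ g * S.ncard + Fintype.card V := by omega

end CountBound

end TBaux

/-- Every `n`-vertex cubic graph with girth at least `g` has a matching covering all but at
most `n/g` vertices. -/
theorem stmt2 (V : Type) [Fintype V] (G : SimpleGraph V) [DecidableRel G.Adj]
    (g : ℕ) (hg : 3 ≤ g) (hcubic : ∀ v : V, G.degree v = 3)
    (hgirth : (g : ℕ∞) ≤ G.egirth) :
    ∃ M : SimpleGraph.Subgraph G, M.IsMatching ∧
      (Fintype.card V : ℝ) - M.verts.ncard ≤ (Fintype.card V : ℝ) / g := by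
  classical
  obtain ⟨Smax, -, hmaxw⟩ := Set.Finite.exists_maximalFor
    (fun S : Set V => (TBaux.oddComps G (Set.univ \ S)).ncard - S.ncard)
    (Set.univ : Set (Set V)) (Set.toFinite _) ⟨∅, trivial⟩
  set d : ℕ := (TBaux.oddComps G (Set.univ \ Smax)).ncard - Smax.ncard with hd
  have hmax : ∀ S : Set V, (TBaux.oddComps G (Set.univ \ S)).ncard - S.ncard ≤ d := by
    intro S
    by_contra h
    push_neg at h
    have : (TBaux.oddComps G (Set.univ \ S)).ncard - S.ncard ≤ d := @hmaxw S trivial (le_of_lt h)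
    omega
  have hTB : ∀ S : Set V, S ⊆ Set.univ →
      (TBaux.oddComps G (Set.univ \ S)).ncard ≤ S.ncard + d := by
    intro S _
    have := hmax S
    omega
  have hn : (Set.univ : Set V).ncard = Fintype.card V := by
    rw [Set.ncard_univ, Nat.card_eq_fintype_card]
  -- parity
  have hpar : d % 2 = (Set.univ : Set V).ncard % 2 := by
    have hA := TBaux.oddComps_parity G (Set.univ \ Smax)
    have hdiff : (Set.univ \ Smax).ncard = (Set.univ : Set V).ncard - Smax.ncard :=
      Set.ncard_diff (Set.subset_univ _)
    have hle : Smax.ncard ≤ (Set.univ : Set V).ncard :=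
      Set.ncard_le_ncard (Set.subset_univ _) (Set.toFinite _)
    by_cases hcase : Smax.ncard ≤ (TBaux.oddComps G (Set.univ \ Smax)).ncard
    · omega
    · have h0 := hmax ∅
      have hpe := TBaux.oddComps_parity G (Set.univ \ (∅ : Set V))
      rw [Set.diff_empty] at hpe h0
      simp only [Set.ncard_empty, Nat.sub_zero] at h0
      have hd0 : d = 0 := by omega
      have hcnt : (TBaux.oddComps G (Set.univ : Set V)).ncard = 0 := by omega
      omega
  -- counting bound : g * d ≤ n
  have hgd : g * d ≤ Fintype.card V := by
    have hcb := TBaux.count_bound G g hcubic hgirth Smax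
    by_cases hcase : (TBaux.oddComps G (Set.univ \ Smax)).ncard ≤ Smax.ncard
    · have hd0 : d = 0 := by omega
      simp [hd0]
    · have h1 : d + Smax.ncard = (TBaux.oddComps G (Set.univ \ Smax)).ncard := by omega
      have h2 : g * (TBaux.oddComps G (Set.univ \ Smax)).ncard
          = g * d + g * Smax.ncard := by
        rw [← h1, Nat.mul_add]
      omega
  -- apply Tutte–Berge
  obtain ⟨M, hM, hMsub, hMcard⟩ := TBaux.tb_main G (Set.univ : Set V).ncard
    (Set.univ : Set V) d le_rfl hpar hTB
  refine ⟨M, hM, ?_⟩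
  rw [hn] at hMcard
  have hg0 : (0:ℝ) < (g : ℝ) := by
    have : (0:ℕ) < g := by omega
    exact_mod_cast this
  have hdle : (d : ℝ) ≤ (Fintype.card V : ℝ) / g := by
    rw [le_div_iff₀ hg0]
    have : ((d * g : ℕ) : ℝ) ≤ ((Fintype.card V : ℕ) : ℝ) := by
      exact_mod_cast (by rw [Nat.mul_comm]; exact hgd : d * g ≤ Fintype.card V)
    exact_mod_cast this
  have hvle : (Fintype.card V : ℝ) - M.verts.ncard ≤ d := by
    have : (Fintype.card V : ℕ) ≤ M.verts.ncard + d := hMcard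
    have h2 : ((Fintype.card V : ℕ) : ℝ) ≤ (M.verts.ncard : ℝ) + d := by
      exact_mod_cast this
    linarith
  linarith
end

section
/- Every bridgeless cubic graph has a 2-factor, i.e., a spanning subgraph in which every vertex has degree exactly 2. -/
open SimpleGraph
open scoped symmDiff

namespace PetersenAux

variable {V : Type}

/-- partner uniqueness -/
lemma pm_unique {G : SimpleGraph V} {M : G.Subgraph} (hM : M.IsPerfectMatching)
    {v w w' : V} (h1 : M.Adj v w) (h2 : M.Adj v w') : w = w' := by
  obtain ⟨u, _, hu⟩ := Subgraph.isPerfectMatching_iff.mp hM v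
  rw [hu w h1, hu w' h2]

lemma pm_transfer {G' G'' : SimpleGraph V} {M : G'.Subgraph} (h : M.IsPerfectMatching)
    (hle : M.spanningCoe ≤ G'') : ∃ N : G''.Subgraph, N.IsPerfectMatching :=
  ⟨G''.toSubgraph M.spanningCoe hle, (Subgraph.IsPerfectMatching.toSubgraph_iff hle).mpr h⟩

/-- symmetric difference of two perfect matchings is alternating w.r.t. the first -/
lemma alt_symmDiff {G G' : SimpleGraph V} {M : G.Subgraph} {M' : G'.Subgraph}
    (hM : M.IsPerfectMatching) (hM' : M'.IsPerfectMatching) :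
    (M.spanningCoe ∆ M'.spanningCoe).IsAlternating M.spanningCoe := by
  intro v w w' hne hvw hvw'
  simp only [symmDiff_def, sup_adj, sdiff_adj, Subgraph.spanningCoe_adj] at hvw hvw'
  constructor
  · rintro h1 h2
    exact hne (pm_unique hM h1 h2)
  · intro h1
    rcases hvw with h | h
    · exact h.1
    · rcases hvw' with h' | h'
      · exact absurd h'.1 h1
      · exact absurd (pm_unique hM' h.1 h'.1) hne

lemma alt_symmDiff' {G G' : SimpleGraph V} {M : G.Subgraph} {M' : G'.Subgraph}
    (hM : M.IsPerfectMatching) (hM' : M'.IsPerfectMatching) :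
    (M.spanningCoe ∆ M'.spanningCoe).IsAlternating M'.spanningCoe := by
  rw [symmDiff_comm]
  exact alt_symmDiff hM' hM

/-- in an IsCycles graph, a vertex with two distinct neighbors has neighborhood exactly the pair -/
lemma nbhd_pair [Fintype V] {H : SimpleGraph V} (hH : H.IsCycles) {v w w' : V}
    (hne : w ≠ w') (h1 : H.Adj v w) (h2 : H.Adj v w') {y : V} (hy : H.Adj v y) :
    y = w ∨ y = w' := by
  have hsub : {w, w'} ⊆ H.neighborSet v := by
    rintro z (rfl | hz)
    · exact h1
    · simp only [Set.mem_singleton_iff] at hz; subst hz; exact h2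
  have hcard : (H.neighborSet v).ncard = 2 := hH ⟨w, h1⟩
  have h2' : ({w, w'} : Set V).ncard = 2 := Set.ncard_pair hne
  have := Set.eq_of_subset_of_ncard_le hsub (by rw [hcard, h2']) (Set.toFinite _)
  have hy' : y ∈ ({w, w'} : Set V) := this ▸ hy
  simpa using hy'

/-- an interior vertex of a path has two distinct incident edges -/
lemma interior_two_edges {K : SimpleGraph V} :
    ∀ {u v : V} (R : K.Walk u v), R.IsPath → ∀ w ∈ R.support, w ≠ u → w ≠ v →
    ∃ x y, x ≠ y ∧ s(w, x) ∈ R.edges ∧ s(w, y) ∈ R.edges := by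
  intro u v R
  induction R with
  | nil => intro _ w hw hwu _; simp at hw; exact absurd hw hwu
  | @cons a b c h p ih =>
    intro hp w hw hwu hwv
    rw [Walk.support_cons] at hw
    rcases List.mem_cons.mp hw with rfl | hw'
    · exact absurd rfl hwu
    · by_cases hwb : w = b
      · subst hwb
        -- w = b : use edge (a,b) and first edge of p
        cases p with
        | nil => exact absurd rfl hwv
        | @cons b' c' d' h2 q =>
          refine ⟨a, c', ?_, ?_, ?_⟩
          · rintro rfl
            have := hp.2
            simp only [Walk.support_cons, List.nodup_cons] at this
            exact this.1 (by simp [Walk.support_cons])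
          · rw [Walk.edges_cons]
            exact List.mem_cons.mpr (Or.inl (Sym2.eq_swap ▸ rfl))
          · rw [Walk.edges_cons, Walk.edges_cons]
            exact List.mem_cons.mpr (Or.inr (List.mem_cons.mpr (Or.inl rfl)))
      · obtain ⟨x, y, hxy, hx, hy⟩ := ih hp.of_cons w hw' hwb hwv
        exact ⟨x, y, hxy, by rw [Walk.edges_cons]; exact List.mem_cons.mpr (Or.inr hx),
          by rw [Walk.edges_cons]; exact List.mem_cons.mpr (Or.inr hy)⟩

/-- Build an alternating cycle from a path `R` from `u` to `v` together with the
two closing edges `a-u` and `a-v`. -/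
lemma cycle_lemma [Fintype V] {Gsym N K : SimpleGraph V} (hK : K ≤ Gsym)
    (hcyc : Gsym.IsCycles) (halt : Gsym.IsAlternating N)
    {a u v cu cv : V} (R : K.Walk u v) (hR : R.IsPath) (huv : u ≠ v)
    (haR : a ∉ R.support)
    (hcu : ∀ y, s(u, y) ∈ R.edges → y = cu) (hcv : ∀ y, s(v, y) ∈ R.edges → y = cv)
    (hcua : cu ≠ a) (hcva : cv ≠ a)
    (hNau : N.Adj a u) (hNav : ¬ N.Adj a v) (hNucu : ¬ N.Adj u cu) (hNvcv : N.Adj v cv) :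
    ∃ C' : SimpleGraph V, C'.IsCycles ∧ C'.IsAlternating N ∧ C'.Adj a u ∧ C'.Adj a v ∧
      (∀ x y, C'.Adj x y → s(x, y) ∈ R.edges ∨ s(x, y) = s(a, u) ∨ s(x, y) = s(a, v)) := by
  classical
  have hau : a ≠ u := fun h => haR (h ▸ R.start_mem_support)
  have hav : a ≠ v := fun h => haR (h ▸ R.end_mem_support)
  set C' : SimpleGraph V :=
    fromEdgeSet (insert s(a, u) (insert s(a, v) {e | e ∈ R.edges})) with hC'
  have hadj : ∀ {x y : V}, C'.Adj x y ↔
      ((s(x, y) ∈ R.edges ∨ s(x, y) = s(a, u) ∨ s(x, y) = s(a, v)) ∧ x ≠ y) := by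
    intro x y
    rw [hC', fromEdgeSet_adj]
    simp only [Set.mem_insert_iff, Set.mem_setOf_eq]
    tauto
  -- membership in R-edges gives support
  have hsupp : ∀ {x y : V}, s(x, y) ∈ R.edges → x ∈ R.support :=
    fun h => R.fst_mem_support_of_mem_edges h
  -- neighbor classification
  have hnbr_a : ∀ {y}, C'.Adj a y → y = u ∨ y = v := by
    intro y h
    rcases (hadj.mp h).1 with h1 | h1 | h1
    · exact absurd (hsupp h1) haR
    · rcases Sym2.eq_iff.mp h1 with ⟨_, rfl⟩ | ⟨h2, _⟩
      · exact Or.inl rfl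
      · exact absurd h2 hau
    · rcases Sym2.eq_iff.mp h1 with ⟨_, rfl⟩ | ⟨h2, _⟩
      · exact Or.inr rfl
      · exact absurd h2 hav
  have hnbr_u : ∀ {y}, C'.Adj u y → y = a ∨ y = cu := by
    intro y h
    rcases (hadj.mp h).1 with h1 | h1 | h1
    · exact Or.inr (hcu y h1)
    · rcases Sym2.eq_iff.mp h1 with ⟨h2, _⟩ | ⟨_, rfl⟩
      · exact absurd h2.symm hau
      · exact Or.inl rfl
    · rcases Sym2.eq_iff.mp h1 with ⟨h2, _⟩ | ⟨h2, _⟩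
      · exact absurd h2.symm hau
      · exact absurd h2 huv
  have hnbr_v : ∀ {y}, C'.Adj v y → y = a ∨ y = cv := by
    intro y h
    rcases (hadj.mp h).1 with h1 | h1 | h1
    · exact Or.inr (hcv y h1)
    · rcases Sym2.eq_iff.mp h1 with ⟨h2, _⟩ | ⟨h2, _⟩
      · exact absurd h2.symm hav
      · exact absurd h2.symm huv
    · rcases Sym2.eq_iff.mp h1 with ⟨h2, _⟩ | ⟨_, rfl⟩
      · exact absurd h2.symm hav
      · exact Or.inl rfl
  have hnbr_int : ∀ {w y}, w ∈ R.support → w ≠ u → w ≠ v → C'.Adj w y → Gsym.Adj w y := by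
    intro w y hw hwu hwv h
    rcases (hadj.mp h).1 with h1 | h1 | h1
    · exact hK (R.adj_of_mem_edges h1)
    · rcases Sym2.eq_iff.mp h1 with ⟨h2, _⟩ | ⟨h2, _⟩
      · exact absurd (h2 ▸ hw) haR
      · exact absurd h2 hwu
    · rcases Sym2.eq_iff.mp h1 with ⟨h2, _⟩ | ⟨h2, _⟩
      · exact absurd (h2 ▸ hw) haR
      · exact absurd h2 hwv
  -- basic adjacencies
  have hCau : C'.Adj a u := hadj.mpr ⟨Or.inr (Or.inl rfl), hau⟩
  have hCav : C'.Adj a v := hadj.mpr ⟨Or.inr (Or.inr rfl), hav⟩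
  -- first edge of R gives C'.Adj u cu
  have first_edge : ∀ {u' v' : V} (R' : K.Walk u' v'), u' ≠ v' → ∃ y, s(u', y) ∈ R'.edges := by
    intro u' v' R' hne
    cases R' with
    | nil => exact absurd rfl hne
    | cons h q => exact ⟨_, by rw [Walk.edges_cons]; exact List.mem_cons.mpr (Or.inl rfl)⟩
  have hfirst : s(u, cu) ∈ R.edges := by
    obtain ⟨y, hy⟩ := first_edge R huv
    exact (hcu y hy) ▸ hy
  have hCucu : C'.Adj u cu := by
    refine hadj.mpr ⟨Or.inl hfirst, ?_⟩
    exact (K.ne_of_adj (R.adj_of_mem_edges hfirst))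
  have hlast : s(v, cv) ∈ R.edges := by
    obtain ⟨y, hy⟩ := first_edge R.reverse (Ne.symm huv)
    rw [Walk.edges_reverse, List.mem_reverse] at hy
    exact (hcv y hy) ▸ hy
  have hCvcv : C'.Adj v cv := by
    refine hadj.mpr ⟨Or.inl hlast, ?_⟩
    exact (K.ne_of_adj (R.adj_of_mem_edges hlast))
  refine ⟨C', ?_, ?_, hCau, hCav, fun x y h => (hadj.mp h).1⟩
  · -- IsCycles
    intro w hw
    by_cases hwa : w = a
    · subst hwa
      have : C'.neighborSet w = {u, v} := by
        ext y
        simp only [mem_neighborSet, Set.mem_insert_iff, Set.mem_singleton_iff]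
        exact ⟨fun h => hnbr_a h, fun h => by rcases h with rfl | rfl <;> assumption⟩
      rw [this]; exact Set.ncard_pair huv
    by_cases hwu : w = u
    · subst hwu
      have : C'.neighborSet w = {a, cu} := by
        ext y
        simp only [mem_neighborSet, Set.mem_insert_iff, Set.mem_singleton_iff]
        exact ⟨fun h => hnbr_u h, fun h => by
          rcases h with rfl | rfl
          · exact hCau.symm
          · exact hCucu⟩
      rw [this]; exact Set.ncard_pair (Ne.symm hcua)
    by_cases hwv : w = v
    · subst hwv
      have : C'.neighborSet w = {a, cv} := by
        ext y
        simp only [mem_neighborSet, Set.mem_insert_iff, Set.mem_singleton_iff]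
        exact ⟨fun h => hnbr_v h, fun h => by
          rcases h with rfl | rfl
          · exact hCav.symm
          · exact hCvcv⟩
      rw [this]; exact Set.ncard_pair (Ne.symm hcva)
    -- w ∉ {a, u, v}
    obtain ⟨z, hz⟩ := hw
    have hwsupp : w ∈ R.support := by
      rcases (hadj.mp hz).1 with h1 | h1 | h1
      · exact hsupp h1
      · rcases Sym2.eq_iff.mp h1 with ⟨h2, _⟩ | ⟨h2, _⟩ <;> [exact absurd h2 hwa; exact absurd h2 hwu]
      · rcases Sym2.eq_iff.mp h1 with ⟨h2, _⟩ | ⟨h2, _⟩ <;> [exact absurd h2 hwa; exact absurd h2 hwv]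
    obtain ⟨x, y, hxy, hx, hy⟩ := interior_two_edges R hR w hwsupp hwu hwv
    have hCx : C'.Adj w x := hadj.mpr ⟨Or.inl hx, K.ne_of_adj (R.adj_of_mem_edges hx)⟩
    have hCy : C'.Adj w y := hadj.mpr ⟨Or.inl hy, K.ne_of_adj (R.adj_of_mem_edges hy)⟩
    have hsub1 : ({x, y} : Set V) ⊆ C'.neighborSet w := by
      rintro z' (rfl | hz'); · exact hCx
      · simp only [Set.mem_singleton_iff] at hz'; subst hz'; exact hCy
    have hsub2 : C'.neighborSet w ⊆ Gsym.neighborSet w :=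
      fun z' hz' => hnbr_int hwsupp hwu hwv hz'
    have hG2 : (Gsym.neighborSet w).ncard = 2 := hcyc ⟨x, hnbr_int hwsupp hwu hwv hCx⟩
    have h2a : 2 ≤ (C'.neighborSet w).ncard := by
      calc 2 = ({x, y} : Set V).ncard := (Set.ncard_pair hxy).symm
      _ ≤ _ := Set.ncard_le_ncard hsub1 (Set.toFinite _)
    have h2b : (C'.neighborSet w).ncard ≤ 2 := hG2 ▸ Set.ncard_le_ncard hsub2 (Set.toFinite _)
    omega
  · -- IsAlternating
    intro w y1 y2 hne h1 h2
    by_cases hwa : w = a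
    · subst hwa
      rcases hnbr_a h1 with rfl | rfl <;> rcases hnbr_a h2 with rfl | rfl
      · exact absurd rfl hne
      · simp [hNau, hNav]
      · constructor
        · intro h; exact absurd h hNav
        · intro h; exact absurd hNau h
      · exact absurd rfl hne
    by_cases hwu : w = u
    · subst hwu
      have hNwa : N.Adj w a := hNau.symm
      rcases hnbr_u h1 with rfl | rfl <;> rcases hnbr_u h2 with rfl | rfl
      · exact absurd rfl hne
      · simp [hNwa, hNucu]
      · constructor
        · intro h; exact absurd h hNucu
        · intro h; exact absurd hNwa h
      · exact absurd rfl hne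
    by_cases hwv : w = v
    · subst hwv
      have hNwa : ¬ N.Adj w a := fun h => hNav h.symm
      rcases hnbr_v h1 with rfl | rfl <;> rcases hnbr_v h2 with rfl | rfl
      · exact absurd rfl hne
      · constructor
        · intro h; exact absurd h hNwa
        · intro h; exact absurd hNvcv h
      · simp [hNwa, hNvcv]
      · exact absurd rfl hne
    have hwsupp : w ∈ R.support := by
      rcases (hadj.mp h1).1 with h3 | h3 | h3
      · exact hsupp h3
      · rcases Sym2.eq_iff.mp h3 with ⟨h4, _⟩ | ⟨h4, _⟩ <;> [exact absurd h4 hwa; exact absurd h4 hwu]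
      · rcases Sym2.eq_iff.mp h3 with ⟨h4, _⟩ | ⟨h4, _⟩ <;> [exact absurd h4 hwa; exact absurd h4 hwv]
    exact halt hne (hnbr_int hwsupp hwu hwv h1) (hnbr_int hwsupp hwu hwv h2)

/-- the graph with all edges at `a` removed -/
def Kdel (H : SimpleGraph V) (a : V) : SimpleGraph V where
  Adj v w := H.Adj v w ∧ v ≠ a ∧ w ≠ a
  symm := ⟨fun v w h => ⟨h.1.symm, h.2.2, h.2.1⟩⟩
  loopless := ⟨fun v h => H.loopless.irrefl v h.1⟩

lemma Kdel_le {H : SimpleGraph V} {a : V} : Kdel H a ≤ H := fun _ _ h => h.1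

lemma Kdel_not_adj {H : SimpleGraph V} {a w : V} : ¬ (Kdel H a).Adj a w := fun h => h.2.1 rfl

/-- a walk in `Kdel H a` starting away from `a` avoids `a` -/
lemma Kdel_walk_avoid {H : SimpleGraph V} {a : V} :
    ∀ {x y : V} (W : (Kdel H a).Walk x y), x ≠ a → a ∉ W.support := by
  intro x y W
  induction W with
  | nil => intro h; simp [Ne.symm h]
  | cons h p ih =>
    intro hx
    rw [Walk.support_cons]
    intro hmem
    rcases List.mem_cons.mp hmem with h' | hmem'
    · exact hx h'.symm
    · exact ih h.2.2 hmem'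

lemma Kdel_reach_end {H : SimpleGraph V} {a x : V} (h : (Kdel H a).Reachable x a) : x = a := by
  obtain ⟨W⟩ := h.symm
  cases W with
  | nil => rfl
  | cons h p => exact absurd h Kdel_not_adj

/-- parity argument : deleting a vertex of a disjoint union of cycles keeps its two
neighbors connected -/
lemma reach_other [Fintype V] {Gsym : SimpleGraph V} (hcyc : Gsym.IsCycles) {a c a2 : V}
    (hac : Gsym.Adj a c) (ha2 : Gsym.Adj a a2) (hne : c ≠ a2) :
    (Kdel Gsym a).Reachable c a2 := by
  classical
  by_contra hcon
  set K := Kdel Gsym a with hK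
  set D : Set V := {v | K.Reachable c v} with hD
  have hcD : c ∈ D := Reachable.refl c
  have hclosed : ∀ v w, v ∈ D → K.Adj v w → w ∈ D := fun v w hv h => hv.trans h.reachable
  have haD : a ∉ D := fun h => (Gsym.ne_of_adj hac).symm (Kdel_reach_end h)
  have ha2D : a2 ∉ D := hcon
  set KD : SimpleGraph V := ⟨fun v w => K.Adj v w ∧ v ∈ D ∧ w ∈ D,
    ⟨fun v w h => ⟨h.1.symm, h.2.2, h.2.1⟩⟩, ⟨fun v h => K.loopless.irrefl v h.1⟩⟩ with hKD
  letI : DecidableRel KD.Adj := Classical.decRel _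
  have hhs := KD.sum_degrees_eq_twice_card_edges
  have hnb : ∀ v ∈ D, KD.neighborSet v = Gsym.neighborSet v \ {a} := by
    intro v hv
    ext w
    simp only [mem_neighborSet, Set.mem_diff, Set.mem_singleton_iff]
    constructor
    · rintro ⟨h1, _, _⟩; exact ⟨h1.1, h1.2.2⟩
    · rintro ⟨h1, h2⟩
      have hva : v ≠ a := fun h => haD (h ▸ hv)
      exact ⟨⟨h1, hva, h2⟩, hv, hclosed v w hv ⟨h1, hva, h2⟩⟩
  have hdegeq : ∀ v, KD.degree v = (KD.neighborSet v).ncard := by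
    intro v
    rw [← card_neighborSet_eq_degree, ← Nat.card_eq_fintype_card, Nat.card_coe_set_eq]
  have hdeg2 : ∀ v ∈ D, v ≠ c → KD.degree v = 2 := by
    intro v hv hvc
    -- v has a K-edge
    obtain ⟨W⟩ := (hv : K.Reachable c v).symm
    have hKedge : ∃ w, K.Adj v w := by
      cases W with
      | nil => exact absurd rfl hvc
      | cons h p => exact ⟨_, h⟩
    obtain ⟨w0, hw0⟩ := hKedge
    have hGnb : (Gsym.neighborSet v).ncard = 2 := hcyc ⟨w0, hw0.1⟩
    have hanb : a ∉ Gsym.neighborSet v := by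
      intro h
      rcases nbhd_pair hcyc hne hac ha2 (Gsym.adj_symm h) with rfl | rfl
      · exact hvc rfl
      · exact ha2D hv
    rw [hdegeq, hnb v hv, Set.diff_singleton_eq_self hanb, hGnb]
  have hdegc : KD.degree c = 1 := by
    have hGnb : (Gsym.neighborSet c).ncard = 2 := hcyc ⟨a, hac.symm⟩
    have hanb : a ∈ Gsym.neighborSet c := hac.symm
    rw [hdegeq, hnb c hcD, Set.ncard_diff_singleton_of_mem hanb, hGnb]
  have hdeg0 : ∀ v, v ∉ D → KD.degree v = 0 := by
    intro v hv
    have hemp : KD.neighborSet v = ∅ := by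
      ext w
      simp only [mem_neighborSet, Set.mem_empty_iff_false, iff_false]
      exact fun h => hv h.2.1
    rw [hdegeq, hemp, Set.ncard_empty]
  have hsum1 : ∑ v : V, KD.degree v = ∑ v ∈ D.toFinset, KD.degree v := by
    exact (Finset.sum_subset (Finset.subset_univ _)
      (fun x _ hx => hdeg0 x (by simpa using hx))).symm
  have hcmem : c ∈ D.toFinset := by simpa using hcD
  have hsum2 : ∑ v ∈ D.toFinset, KD.degree v
      = ∑ v ∈ D.toFinset \ {c}, KD.degree v + KD.degree c := by
    rw [Finset.sum_eq_sum_sdiff_singleton_add hcmem]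
  have hsum3 : ∑ v ∈ D.toFinset \ {c}, KD.degree v = 2 * (D.toFinset \ {c}).card := by
    rw [Finset.sum_congr rfl (fun x hx => ?_), Finset.sum_const, smul_eq_mul, mul_comm]
    simp only [Finset.mem_sdiff, Set.mem_toFinset, Finset.mem_singleton] at hx
    exact hdeg2 x hx.1 hx.2
  omega

lemma exists_pm_adj [Fintype V] {Gmax : SimpleGraph V} (hfree : Gmax.IsMatchingFree)
    (hmax : ∀ G' > Gmax, ∃ M : SimpleGraph.Subgraph G', M.IsPerfectMatching)
    {x y : V} (hxy : ¬ Gmax.Adj x y) (hne : x ≠ y) :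
    ∃ M : (Gmax ⊔ edge x y).Subgraph, M.IsPerfectMatching ∧ M.Adj x y := by
  have hgt : Gmax ⊔ edge x y > Gmax := by
    refine lt_of_le_of_ne le_sup_left (fun h => ?_)
    have : (Gmax ⊔ edge x y).Adj x y := (sup_adj _ _ _ _).mpr (Or.inr (by simp [edge_adj, hne]))
    rw [← h] at this
    exact hxy this
  obtain ⟨M, hM⟩ := hmax _ hgt
  by_cases hMxy : M.Adj x y
  · exact ⟨M, hM, hMxy⟩
  · exfalso
    have hle : M.spanningCoe ≤ Gmax := by
      intro v w hvw
      rw [Subgraph.spanningCoe_adj] at hvw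
      rcases (sup_adj _ _ _ _).mp (M.adj_sub hvw) with h' | h'
      · exact h'
      · rcases (edge_adj x y v w).mp h' with ⟨⟨rfl, rfl⟩ | ⟨rfl, rfl⟩, _⟩
        · exact absurd hvw hMxy
        · exact absurd hvw.symm hMxy
    obtain ⟨N, hN⟩ := pm_transfer hM hle
    exact hfree N hN

lemma first_visit {H : SimpleGraph V} {a : V} {x z : V} (W : H.Walk x z) (hz : z = a)
    (hx : x ≠ a) : ∃ y, H.Adj y a ∧ (Kdel H a).Reachable x y := by
  induction W with
  | nil => exact absurd hz hx
  | @cons u m w h p ih =>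
    by_cases hm : m = a
    · exact ⟨u, hm ▸ h, Reachable.refl u⟩
    · obtain ⟨y, hy, hr⟩ := ih hz hm
      exact ⟨y, hy, (Adj.reachable (⟨h, hx, hm⟩ : (Kdel H a).Adj u m)).trans hr⟩

lemma caseB [Fintype V] {Gmax : SimpleGraph V} (hfree : Gmax.IsMatchingFree)
    (hmax : ∀ G' > Gmax, ∃ M : SimpleGraph.Subgraph G', M.IsPerfectMatching)
    {a b c d : V} (hab : Gmax.Adj a b) (hbc : Gmax.Adj b c) (hac : ¬ Gmax.Adj a c)
    (hacne : a ≠ c) (hbd : ¬ Gmax.Adj b d) (hbdne : b ≠ d) : False := by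
  classical
  have habne : a ≠ b := Gmax.ne_of_adj hab
  have hbcne : b ≠ c := Gmax.ne_of_adj hbc
  have hdc : d ≠ c := fun h => hbd (h ▸ hbc)
  obtain ⟨M1, hM1, hM1ac⟩ := exists_pm_adj hfree hmax hac hacne
  obtain ⟨M2, hM2, hM2bd⟩ := exists_pm_adj hfree hmax hbd hbdne
  have hM2ac : ¬ M2.Adj a c := by
    intro h
    rcases (sup_adj _ _ _ _).mp (M2.adj_sub h) with h' | h'
    · exact hac h'
    · rcases (edge_adj b d a c).mp h' with ⟨⟨rfl, rfl⟩ | ⟨rfl, rfl⟩, _⟩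
      · exact habne rfl
      · exact hbcne rfl
  have hM1bd : ¬ M1.Adj b d := by
    intro h
    rcases (sup_adj _ _ _ _).mp (M1.adj_sub h) with h' | h'
    · exact hbd h'
    · rcases (edge_adj a c b d).mp h' with ⟨⟨rfl, rfl⟩ | ⟨rfl, rfl⟩, _⟩
      · exact habne rfl
      · exact hbcne rfl
  set Gsym := M1.spanningCoe ∆ M2.spanningCoe with hGsym
  have hcyc : Gsym.IsCycles := Subgraph.IsPerfectMatching.symmDiff_isCycles hM1 hM2
  have halt1 : Gsym.IsAlternating M1.spanningCoe := alt_symmDiff hM1 hM2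
  have halt2 : Gsym.IsAlternating M2.spanningCoe := alt_symmDiff' hM1 hM2
  have hsymadj : ∀ {v w : V}, Gsym.Adj v w ↔
      (M1.Adj v w ∧ ¬ M2.Adj v w) ∨ (M2.Adj v w ∧ ¬ M1.Adj v w) := by
    intro v w
    simp [hGsym, symmDiff_def, sup_adj, sdiff_adj, Subgraph.spanningCoe_adj]
  have hsac : Gsym.Adj a c := hsymadj.mpr (Or.inl ⟨hM1ac, hM2ac⟩)
  have hsbd : Gsym.Adj b d := hsymadj.mpr (Or.inr ⟨hM2bd, hM1bd⟩)
  obtain ⟨b1, hb1, _⟩ := Subgraph.isPerfectMatching_iff.mp hM1 b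
  obtain ⟨a2, ha2, _⟩ := Subgraph.isPerfectMatching_iff.mp hM2 a
  obtain ⟨c2, hc2, _⟩ := Subgraph.isPerfectMatching_iff.mp hM2 c
  obtain ⟨d1, hd1, _⟩ := Subgraph.isPerfectMatching_iff.mp hM1 d
  have hb1d : b1 ≠ d := fun h => hM1bd (h ▸ hb1)
  have hb1a : b1 ≠ a := fun h => hbcne (pm_unique hM1 (h ▸ hb1).symm hM1ac)
  have ha2c : a2 ≠ c := fun h => hM2ac (h ▸ ha2)
  have hc2a : c2 ≠ a := fun h => hM2ac ((h ▸ hc2).symm)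
  have hd1b : d1 ≠ b := fun h => hM1bd ((h ▸ hd1).symm)
  have hc2b : c2 ≠ b := fun h => hdc (pm_unique hM2 hM2bd ((h ▸ hc2).symm))
  have hsbb1 : Gsym.Adj b b1 := hsymadj.mpr (Or.inl ⟨hb1,
    fun h => hb1d (pm_unique hM2 h hM2bd)⟩)
  have hsaa2 : Gsym.Adj a a2 := hsymadj.mpr (Or.inr ⟨ha2,
    fun h => ha2c (pm_unique hM1 h hM1ac)⟩)
  have hscc2 : Gsym.Adj c c2 := hsymadj.mpr (Or.inr ⟨hc2,
    fun h => hc2a (pm_unique hM1 h hM1ac.symm)⟩)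
  have hsdd1 : Gsym.Adj d d1 := hsymadj.mpr (Or.inl ⟨hd1,
    fun h => hd1b (pm_unique hM2 h hM2bd.symm)⟩)
  have hca2 : c ≠ a2 := fun h => hM2ac (h ▸ ha2)
  have hdb1 : d ≠ b1 := Ne.symm hb1d
  have hbd1 : b ≠ d1 := Ne.symm hd1b
  have hac2 : a ≠ c2 := Ne.symm hc2a
  have hnbra : ∀ {y}, Gsym.Adj a y → y = c ∨ y = a2 := fun hy => nbhd_pair hcyc hca2 hsac hsaa2 hy
  have hnbrb : ∀ {y}, Gsym.Adj b y → y = d ∨ y = b1 := fun hy => nbhd_pair hcyc hdb1 hsbd hsbb1 hy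
  have hnbrc : ∀ {y}, Gsym.Adj c y → y = a ∨ y = c2 := fun hy => nbhd_pair hcyc hac2 hsac.symm hscc2 hy
  have hnbrd : ∀ {y}, Gsym.Adj d y → y = b ∨ y = d1 := fun hy => nbhd_pair hcyc hbd1 hsbd.symm hsdd1 hy
  -- spanningCoe non-adjacency facts
  have hM1ab : ¬ M1.Adj a b := fun h => hbcne (pm_unique hM1 h hM1ac)
  have hM1cc2 : ¬ M1.Adj c c2 := fun h => hc2a (pm_unique hM1 h hM1ac.symm)
  have hM2bc : ¬ M2.Adj b c := fun h => hdc (pm_unique hM2 hM2bd h)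
  have hM2dd1 : ¬ M2.Adj d d1 := fun h => hd1b (pm_unique hM2 h hM2bd.symm)
  by_cases hreach : Gsym.Reachable a b
  · -- main case : alternating path surgery
    set K := Kdel Gsym a with hKdef
    have hKcb : K.Reachable c b := by
      obtain ⟨W⟩ := hreach.symm
      obtain ⟨y, hy, hr⟩ := first_visit W rfl (Ne.symm habne)
      rcases hnbra hy.symm with rfl | rfl
      · exact hr.symm
      · exact (reach_other hcyc hsac hsaa2 hca2).trans hr.symm
    obtain ⟨p, hp⟩ : ∃ p : K.Walk c b, p.IsPath := ⟨hKcb.some.toPath.1, hKcb.some.toPath.2⟩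
    have hap : a ∉ p.support := Kdel_walk_avoid p (Ne.symm hacne)
    by_cases hd : d ∈ p.support
    · -- case (ii) : pivot at b with matching M2
      set p' := p.takeUntil d hd with hp'def
      have hp'path : p'.IsPath := hp.takeUntil hd
      have hap' : a ∉ p'.support := fun h => hap (p.support_takeUntil_subset hd h)
      have hbp' : b ∉ p'.support := by
        intro hb
        have hnodup := hp.support_nodup
        rw [← p.take_spec hd, Walk.support_append] at hnodup
        have hdisj := (List.nodup_append.mp hnodup).2.2
        have hbdrop : b ∈ (p.dropUntil d hd).support := Walk.end_mem_support _
        rw [Walk.support_eq_cons] at hbdrop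
        rcases List.mem_cons.mp hbdrop with h' | h'
        · exact hbdne h'
        · exact hdisj b hb b h' rfl
      set R := p'.reverse with hRdef
      have hRpath : R.IsPath := hp'path.reverse
      have hbR : b ∉ R.support := by
        rw [hRdef, Walk.support_reverse]
        exact fun h => hbp' (List.mem_reverse.mp h)
      have hRedges : ∀ {e}, e ∈ R.edges → e ∈ p'.edges := by
        intro e he
        rw [hRdef, Walk.edges_reverse] at he
        exact List.mem_reverse.mp he
      have hcu : ∀ y, s(d, y) ∈ R.edges → y = d1 := by
        intro y hy
        have hKadj : K.Adj d y := R.adj_of_mem_edges hy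
        rcases hnbrd hKadj.1 with rfl | rfl
        · exact absurd (p'.snd_mem_support_of_mem_edges (hRedges hy)) hbp'
        · rfl
      have hcv : ∀ y, s(c, y) ∈ R.edges → y = c2 := by
        intro y hy
        have hKadj : K.Adj c y := R.adj_of_mem_edges hy
        rcases hnbrc hKadj.1 with rfl | rfl
        · exact absurd rfl hKadj.2.2
        · rfl
      obtain ⟨C', hCcyc, hCalt, hCbd, hCbc, hCedges⟩ :=
        cycle_lemma Kdel_le hcyc halt2 R hRpath hdc hbR hcu hcv hd1b hc2b
          (by simp [Subgraph.spanningCoe_adj]; exact hM2bd)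
          (by simp [Subgraph.spanningCoe_adj]; exact hM2bc)
          (by simp [Subgraph.spanningCoe_adj]; exact hM2dd1)
          (by simp [Subgraph.spanningCoe_adj]; exact hc2)
      have hpm' := Subgraph.IsPerfectMatching.symmDiff_of_isAlternating hM2 hCalt hCcyc
      have hle : M2.spanningCoe ∆ C' ≤ Gmax := by
        intro v w hvw
        rcases (by simpa [symmDiff_def, sup_adj, sdiff_adj] using hvw :
            (M2.spanningCoe.Adj v w ∧ ¬ C'.Adj v w) ∨ (C'.Adj v w ∧ ¬ M2.spanningCoe.Adj v w))
          with ⟨h1, h2⟩ | ⟨h1, h2⟩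
        · rw [Subgraph.spanningCoe_adj] at h1
          rcases (sup_adj _ _ _ _).mp (M2.adj_sub h1) with h' | h'
          · exact h'
          · rcases (edge_adj b d v w).mp h' with ⟨⟨rfl, rfl⟩ | ⟨rfl, rfl⟩, _⟩
            · exact absurd hCbd h2
            · exact absurd hCbd.symm h2
        · rw [Subgraph.spanningCoe_adj] at h2
          rcases hCedges v w h1 with he | he | he
          · have hKadj : K.Adj v w := R.adj_of_mem_edges he
            have hM1vw : M1.Adj v w := by
              rcases hsymadj.mp hKadj.1 with h'' | h''
              · exact h''.1
              · exact absurd h''.1 h2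
            rcases (sup_adj _ _ _ _).mp (M1.adj_sub hM1vw) with h' | h'
            · exact h'
            · rcases (edge_adj a c v w).mp h' with ⟨⟨rfl, rfl⟩ | ⟨rfl, rfl⟩, _⟩
              · exact absurd rfl hKadj.2.1
              · exact absurd rfl hKadj.2.2
          · rcases Sym2.eq_iff.mp he with ⟨rfl, rfl⟩ | ⟨rfl, rfl⟩
            · exact absurd hM2bd h2
            · exact absurd hM2bd.symm h2
          · rcases Sym2.eq_iff.mp he with ⟨rfl, rfl⟩ | ⟨rfl, rfl⟩
            · exact hbc
            · exact hbc.symm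
      obtain ⟨N, hN⟩ := pm_transfer hpm' hle
      exact hfree N hN
    · -- case (i) : pivot at a with matching M1
      have hcu : ∀ y, s(c, y) ∈ p.edges → y = c2 := by
        intro y hy
        have hKadj : K.Adj c y := p.adj_of_mem_edges hy
        rcases hnbrc hKadj.1 with rfl | rfl
        · exact absurd rfl hKadj.2.2
        · rfl
      have hcv : ∀ y, s(b, y) ∈ p.edges → y = b1 := by
        intro y hy
        have hKadj : K.Adj b y := p.adj_of_mem_edges hy
        rcases hnbrb hKadj.1 with rfl | rfl
        · exact absurd (p.snd_mem_support_of_mem_edges hy) hd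
        · rfl
      obtain ⟨C', hCcyc, hCalt, hCac, hCab, hCedges⟩ :=
        cycle_lemma Kdel_le hcyc halt1 p hp (Ne.symm hbcne) hap hcu hcv hc2a hb1a
          (by simp [Subgraph.spanningCoe_adj]; exact hM1ac)
          (by simp [Subgraph.spanningCoe_adj]; exact hM1ab)
          (by simp [Subgraph.spanningCoe_adj]; exact hM1cc2)
          (by simp [Subgraph.spanningCoe_adj]; exact hb1)
      have hpm' := Subgraph.IsPerfectMatching.symmDiff_of_isAlternating hM1 hCalt hCcyc
      have hle : M1.spanningCoe ∆ C' ≤ Gmax := by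
        intro v w hvw
        rcases (by simpa [symmDiff_def, sup_adj, sdiff_adj] using hvw :
            (M1.spanningCoe.Adj v w ∧ ¬ C'.Adj v w) ∨ (C'.Adj v w ∧ ¬ M1.spanningCoe.Adj v w))
          with ⟨h1, h2⟩ | ⟨h1, h2⟩
        · rw [Subgraph.spanningCoe_adj] at h1
          rcases (sup_adj _ _ _ _).mp (M1.adj_sub h1) with h' | h'
          · exact h'
          · rcases (edge_adj a c v w).mp h' with ⟨⟨rfl, rfl⟩ | ⟨rfl, rfl⟩, _⟩
            · exact absurd hCac h2
            · exact absurd hCac.symm h2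
        · rw [Subgraph.spanningCoe_adj] at h2
          rcases hCedges v w h1 with he | he | he
          · have hKadj : K.Adj v w := p.adj_of_mem_edges he
            have hM2vw : M2.Adj v w := by
              rcases hsymadj.mp hKadj.1 with h'' | h''
              · exact absurd h''.1 h2
              · exact h''.1
            rcases (sup_adj _ _ _ _).mp (M2.adj_sub hM2vw) with h' | h'
            · exact h'
            · rcases (edge_adj b d v w).mp h' with ⟨⟨rfl, rfl⟩ | ⟨rfl, rfl⟩, _⟩
              · exact absurd (p.snd_mem_support_of_mem_edges he) hd
              · exact absurd (p.fst_mem_support_of_mem_edges he) hd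
          · rcases Sym2.eq_iff.mp he with ⟨rfl, rfl⟩ | ⟨rfl, rfl⟩
            · exact absurd hM1ac h2
            · exact absurd hM1ac.symm h2
          · rcases Sym2.eq_iff.mp he with ⟨rfl, rfl⟩ | ⟨rfl, rfl⟩
            · exact hab
            · exact hab.symm
      obtain ⟨N, hN⟩ := pm_transfer hpm' hle
      exact hfree N hN
  · -- subcase 0 : b not reachable from a in Gsym
    set cycC : SimpleGraph V := ⟨fun v w => Gsym.Adj v w ∧ Gsym.Reachable a v ∧ Gsym.Reachable a w,
      ⟨fun v w h => ⟨h.1.symm, h.2.2, h.2.1⟩⟩, ⟨fun v h => Gsym.loopless.irrefl v h.1⟩⟩ with hcycC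
    have hCcyc : cycC.IsCycles := by
      intro v ⟨w, hw⟩
      have hveq : cycC.neighborSet v = Gsym.neighborSet v := by
        ext z
        simp only [mem_neighborSet]
        exact ⟨fun h => h.1, fun h => ⟨h, hw.2.1, hw.2.1.trans h.reachable⟩⟩
      rw [hveq]
      exact hcyc ⟨w, hw.1⟩
    have hCalt : cycC.IsAlternating M1.spanningCoe := by
      intro v w w' hne h1 h2
      exact halt1 hne h1.1 h2.1
    have hCac : cycC.Adj a c := ⟨hsac, Reachable.refl a, hsac.reachable⟩
    have hpm' := Subgraph.IsPerfectMatching.symmDiff_of_isAlternating hM1 hCalt hCcyc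
    have hle : M1.spanningCoe ∆ cycC ≤ Gmax := by
      intro v w hvw
      rcases (by simpa [symmDiff_def, sup_adj, sdiff_adj] using hvw :
          (M1.spanningCoe.Adj v w ∧ ¬ cycC.Adj v w) ∨ (cycC.Adj v w ∧ ¬ M1.spanningCoe.Adj v w))
        with ⟨h1, h2⟩ | ⟨h1, h2⟩
      · rw [Subgraph.spanningCoe_adj] at h1
        rcases (sup_adj _ _ _ _).mp (M1.adj_sub h1) with h' | h'
        · exact h'
        · rcases (edge_adj a c v w).mp h' with ⟨⟨rfl, rfl⟩ | ⟨rfl, rfl⟩, _⟩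
          · exact absurd hCac h2
          · exact absurd hCac.symm h2
      · rw [Subgraph.spanningCoe_adj] at h2
        have hM2vw : M2.Adj v w := by
          rcases hsymadj.mp h1.1 with h'' | h''
          · exact absurd h''.1 h2
          · exact h''.1
        rcases (sup_adj _ _ _ _).mp (M2.adj_sub hM2vw) with h' | h'
        · exact h'
        · rcases (edge_adj b d v w).mp h' with ⟨⟨rfl, rfl⟩ | ⟨rfl, rfl⟩, _⟩
          · exact absurd h1.2.1 hreach
          · exact absurd h1.2.2 hreach
    obtain ⟨N, hN⟩ := pm_transfer hpm' hle
    exact hfree N hN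

/-- build a perfect matching from a fixed-point free adjacency involution -/
lemma matching_of_involution {G0 : SimpleGraph V} (p : V → V) (h1 : ∀ v, p (p v) = v)
    (h2 : ∀ v, p v ≠ v) (h3 : ∀ v, G0.Adj v (p v)) : ∃ M : G0.Subgraph, M.IsPerfectMatching := by
  refine ⟨⟨Set.univ, fun v w => p v = w, ?_, ?_, ?_⟩, ?_⟩
  · intro v w h
    exact h ▸ h3 v
  · intro v w _
    trivial
  · refine ⟨fun v w h => ?_⟩
    rw [← h, h1]
  · rw [Subgraph.isPerfectMatching_iff]
    intro v
    exact ⟨p v, rfl, fun y hy => (show p v = y from hy).symm⟩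

/-- an even-cardinality clique can be paired up -/
lemma pairing {G0 : SimpleGraph V} :
    ∀ s : Finset V, Even s.card →
    (∀ x ∈ s, ∀ y ∈ s, x ≠ y → G0.Adj x y) →
    ∃ p : V → V, (∀ v ∈ s, p v ∈ s ∧ p (p v) = v ∧ p v ≠ v ∧ G0.Adj v (p v)) ∧
      (∀ v, v ∉ s → p v = v) := by
  classical
  intro s
  induction s using Finset.strongInduction with
  | _ s ih =>
    intro heven hclique
    rcases Finset.eq_empty_or_nonempty s with rfl | ⟨x, hx⟩
    · exact ⟨id, by simp, by simp⟩
    · have h1 : 1 < s.card := by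
        have hpos : 0 < s.card := Finset.card_pos.mpr ⟨x, hx⟩
        rcases heven with ⟨k, hk⟩
        omega
      obtain ⟨y, hy, hyx⟩ := Finset.exists_mem_ne h1 x
      set t := (s.erase x).erase y with ht
      have htsub' : t ⊆ s := (Finset.erase_subset _ _).trans (Finset.erase_subset _ _)
      have hxt : x ∉ t := fun h => (Finset.ne_of_mem_erase (Finset.mem_of_mem_erase h)) rfl
      have hyt : y ∉ t := fun h => (Finset.ne_of_mem_erase h) rfl
      have htsub : t ⊂ s := Finset.ssubset_iff_of_subset htsub' |>.mpr ⟨x, hx, hxt⟩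
      have hcardt : t.card = s.card - 2 := by
        rw [ht, Finset.card_erase_of_mem (Finset.mem_erase.mpr ⟨hyx, hy⟩),
          Finset.card_erase_of_mem hx]
        omega
      have hevent : Even t.card := by
        rcases heven with ⟨k, hk⟩
        refine ⟨k - 1, by omega⟩
      obtain ⟨p', hp'1, hp'2⟩ := ih t htsub hevent
        (fun a ha b hb hab => hclique _ (htsub' ha) _ (htsub' hb) hab)
      refine ⟨fun v => if v = x then y else if v = y then x else p' v, ?_, ?_⟩
      · intro v hv
        dsimp only
        by_cases hvx : v = x
        · rw [hvx, if_pos rfl, if_neg hyx, if_pos rfl]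
          exact ⟨hy, rfl, hyx, hclique _ hx _ hy (Ne.symm hyx)⟩
        · by_cases hvy : v = y
          · rw [hvy, if_neg hyx, if_pos rfl, if_pos rfl]
            exact ⟨hx, rfl, Ne.symm hyx, hclique _ hy _ hx hyx⟩
          · have hvt : v ∈ t := Finset.mem_erase.mpr ⟨hvy, Finset.mem_erase.mpr ⟨hvx, hv⟩⟩
            obtain ⟨hm, hinv, hne, hadj⟩ := hp'1 v hvt
            have hmx : p' v ≠ x := fun h => hxt (h ▸ hm)
            have hmy : p' v ≠ y := fun h => hyt (h ▸ hm)
            rw [if_neg hvx, if_neg hvy, if_neg hmx, if_neg hmy]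
            exact ⟨htsub' hm, hinv, hne, hadj⟩
      · intro v hv
        dsimp only
        have hvx : v ≠ x := fun h => hv (h ▸ hx)
        have hvy : v ≠ y := fun h => hv (h ▸ hy)
        rw [if_neg hvx, if_neg hvy]
        exact hp'2 v (fun h => hv (htsub' h))

/-- components of the induced graph are cliques under the case A hypothesis -/
lemma clique_of_reachable [Fintype V] {Gmax : SimpleGraph V} {U : Set V}
    (hA : ∀ v x y : V, v ∉ U → Gmax.Adj x v → Gmax.Adj v y → x ≠ y → Gmax.Adj x y) :
    ∀ {w1 w2 : ↥(Uᶜ)} (W : (Gmax.comap (Subtype.val : ↥(Uᶜ) → V)).Walk w1 w2),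
      (w1 : V) ≠ (w2 : V) → Gmax.Adj w1 w2 := by
  intro w1 w2 W
  induction W with
  | nil => exact fun h => absurd rfl h
  | @cons u m w h p ih =>
    intro hne
    by_cases hmw : (m : V) = (w : V)
    · exact hmw ▸ (comap_adj.mp h)
    · exact hA m u w m.2 (comap_adj.mp h) (ih hmw) hne

/-- parity of the number of odd components -/
lemma card_parity {β : Type} [Fintype β] (H : SimpleGraph β) :
    Even (Fintype.card β + {c : H.ConnectedComponent | Odd c.supp.ncard}.ncard) := by
  classical
  letI : Fintype H.ConnectedComponent := Fintype.ofFinite _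
  have h1 : Fintype.card β =
      ∑ c : H.ConnectedComponent,
        (Finset.univ.filter (fun v => H.connectedComponentMk v = c)).card := by
    rw [← Finset.card_univ]
    exact Finset.card_eq_sum_card_fiberwise (by simp)
  have h2 : ∀ c : H.ConnectedComponent,
      (Finset.univ.filter (fun v => H.connectedComponentMk v = c)).card = c.supp.ncard := by
    intro c
    rw [Set.ncard_eq_toFinset_card']
    exact congrArg Finset.card (Finset.ext (fun x => by
      simp [ConnectedComponent.mem_supp_iff]))
  have h3 : {c : H.ConnectedComponent | Odd c.supp.ncard}.ncard
      = (Finset.univ.filter (fun c : H.ConnectedComponent => Odd c.supp.ncard)).card := by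
    rw [Set.ncard_eq_toFinset_card']
    exact congrArg Finset.card (Finset.ext (fun x => by simp))
  rw [h3, h1, Finset.sum_congr rfl (fun c _ => h2 c), Nat.even_add]
  exact Finset.even_sum_iff_even_card_odd _

lemma even_card_invol {α : Type*} [DecidableEq α] :
    ∀ (s : Finset α) (f : α → α), (∀ x ∈ s, f x ∈ s) → (∀ x ∈ s, f (f x) = x) →
    (∀ x ∈ s, f x ≠ x) → Even s.card := by
  intro s
  induction s using Finset.strongInduction with
  | _ s ih =>
    intro f h1 h2 h3
    rcases s.eq_empty_or_nonempty with rfl | ⟨x, hx⟩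
    · simp
    · have hfx : f x ∈ s.erase x := Finset.mem_erase.mpr ⟨h3 x hx, h1 x hx⟩
      set t := (s.erase x).erase (f x) with htdef
      have htsub' : t ⊆ s := (Finset.erase_subset _ _).trans (Finset.erase_subset _ _)
      have hxt : x ∉ t := fun h =>
        (Finset.ne_of_mem_erase (Finset.mem_of_mem_erase h)) rfl
      have hfxt : f x ∉ t := fun h => (Finset.ne_of_mem_erase h) rfl
      have htsub : t ⊂ s := (Finset.ssubset_iff_of_subset htsub').mpr ⟨x, hx, hxt⟩
      have hmemt : ∀ y ∈ t, y ∈ s ∧ y ≠ x ∧ y ≠ f x := fun y hy =>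
        ⟨htsub' hy, Finset.ne_of_mem_erase (Finset.mem_of_mem_erase hy),
          Finset.ne_of_mem_erase hy⟩
      have heven : Even t.card := by
        refine ih t htsub f ?_ (fun y hy => h2 y (htsub' hy)) (fun y hy => h3 y (htsub' hy))
        intro y hy
        obtain ⟨hys, hyx, hyfx⟩ := hmemt y hy
        refine Finset.mem_erase.mpr ⟨?_, Finset.mem_erase.mpr ⟨?_, h1 y hys⟩⟩
        · intro h
          exact hyx (by rw [← h2 y hys, h, h2 x hx])
        · intro h
          exact hyfx (by rw [← h2 y hys, h])
      have hcard : s.card = t.card + 2 := by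
        rw [htdef, Finset.card_erase_of_mem hfx, Finset.card_erase_of_mem hx]
        have h4 : 2 ≤ s.card := by
          have := Finset.card_le_card (Finset.insert_subset hx
            (Finset.singleton_subset_iff.mpr (h1 x hx)) :
              ({x, f x} : Finset α) ⊆ s)
          rwa [Finset.card_insert_of_notMem (by
            simp only [Finset.mem_singleton]
            exact fun h => h3 x hx h.symm), Finset.card_singleton] at this
        omega
      rcases heven with ⟨k, hk⟩
      exact ⟨k + 1, by omega⟩

lemma dart_snd_card [Fintype V] (G : SimpleGraph V) [DecidableRel G.Adj] [DecidableEq V]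
    (v : V) :
    (Finset.univ.filter (fun d : G.Dart => d.snd = v)).card = G.degree v := by
  rw [← G.dart_fst_fiber_card_eq_degree v]
  apply Finset.card_bij' (fun d _ => d.symm) (fun d _ => d.symm)
  · intro d _
    exact Dart.symm_symm d
  · intro d _
    exact Dart.symm_symm d
  · intro d hd
    simp only [Finset.mem_filter, Finset.mem_univ, true_and] at hd ⊢
    exact hd
  · intro d hd
    simp only [Finset.mem_filter, Finset.mem_univ, true_and] at hd ⊢
    exact hd

lemma caseA [Fintype V] {Gmax : SimpleGraph V} (U : Set V)
    (hU : ∀ v ∈ U, ∀ w, w ≠ v → Gmax.Adj v w)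
    (hA : ∀ v x y : V, v ∉ U → Gmax.Adj x v → Gmax.Adj v y → x ≠ y → Gmax.Adj x y)
    (hVeven : Even (Fintype.card V))
    (hcount : {c : (Gmax.comap (Subtype.val : ↥(Uᶜ) → V)).ConnectedComponent |
      Odd c.supp.ncard}.ncard ≤ U.ncard) :
    ∃ M : Gmax.Subgraph, M.IsPerfectMatching := by
  classical
  set GU := Gmax.comap (Subtype.val : ↥(Uᶜ) → V) with hGU
  set O := {c : GU.ConnectedComponent | Odd c.supp.ncard} with hO
  -- embedding of odd components into U
  obtain ⟨f, hfinj⟩ : ∃ f : ↥O → ↥U, Function.Injective f := by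
    letI : Fintype ↥O := Fintype.ofFinite _
    letI : Fintype ↥U := Fintype.ofFinite _
    have h1 : Fintype.card ↥O ≤ Fintype.card ↥U := by
      rw [← Nat.card_eq_fintype_card, ← Nat.card_eq_fintype_card,
        Nat.card_coe_set_eq, Nat.card_coe_set_eq]
      exact hcount
    obtain ⟨e⟩ := Function.Embedding.nonempty_iff_card_le.mpr h1
    exact ⟨e, e.injective⟩
  -- representatives
  have hrepex : ∀ c : GU.ConnectedComponent, ∃ v : ↥(Uᶜ), GU.connectedComponentMk v = c :=
    fun c => Quot.exists_rep c
  choose rep hrepp using hrepex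
  set sc : GU.ConnectedComponent → Set V := fun c => Subtype.val '' c.supp with hsc
  have hsc_notU : ∀ {x : V} {c}, x ∈ sc c → x ∉ U := by
    rintro x c ⟨x', _, rfl⟩
    exact x'.2
  have hsc_mk : ∀ {x : V} {c} (hx : x ∈ sc c) (hxU : x ∉ U),
      GU.connectedComponentMk ⟨x, hxU⟩ = c := by
    rintro x c ⟨x', hx', rfl⟩ hxU
    have : (⟨(x' : V), hxU⟩ : ↥(Uᶜ)) = x' := Subtype.ext rfl
    rw [this]
    exact (ConnectedComponent.mem_supp_iff _ _).mp hx'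
  have hmem_sc : ∀ (x : ↥(Uᶜ)), (x : V) ∈ sc (GU.connectedComponentMk x) :=
    fun x => ⟨x, (ConnectedComponent.mem_supp_iff _ _).mpr rfl, rfl⟩
  have hrep_sc : ∀ c, ↑(rep c) ∈ sc c := by
    intro c
    have h := hmem_sc (rep c)
    rwa [hrepp c] at h
  have hclique : ∀ c, ∀ x ∈ sc c, ∀ y ∈ sc c, x ≠ y → Gmax.Adj x y := by
    rintro c x ⟨x', hx', rfl⟩ y ⟨y', hy', rfl⟩ hne
    rw [ConnectedComponent.mem_supp_iff] at hx' hy'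
    obtain ⟨W⟩ := ConnectedComponent.exact (hx'.trans hy'.symm)
    exact clique_of_reachable hA W hne
  have hsc_card : ∀ c : GU.ConnectedComponent, (sc c).ncard = c.supp.ncard :=
    fun c => Set.ncard_image_of_injective _ Subtype.val_injective
  -- the sets to be paired within components
  set sFin : GU.ConnectedComponent → Finset V := fun c =>
    if Odd (c.supp.ncard) then ((sc c).toFinset).erase ↑(rep c) else (sc c).toFinset with hsFin
  have hsFin_mem : ∀ {x : V} {c}, x ∈ sFin c → x ∈ sc c := by
    intro x c hx
    rw [hsFin] at hx
    dsimp only at hx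
    split_ifs at hx with h
    · exact Set.mem_toFinset.mp (Finset.mem_of_mem_erase hx)
    · exact Set.mem_toFinset.mp hx
  have hsFin_even : ∀ c, Even (sFin c).card := by
    intro c
    rw [hsFin]
    dsimp only
    split_ifs with h
    · rw [Finset.card_erase_of_mem (Set.mem_toFinset.mpr (hrep_sc c)),
        ← Set.ncard_eq_toFinset_card', hsc_card]
      rcases h with ⟨k, hk⟩
      exact ⟨k, by omega⟩
    · rw [← Set.ncard_eq_toFinset_card', hsc_card]
      exact Nat.not_odd_iff_even.mp h
  have hsFin_rep : ∀ {c}, Odd (c.supp.ncard) → ↑(rep c) ∉ sFin c := by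
    intro c h hmem
    rw [hsFin] at hmem
    dsimp only at hmem
    rw [if_pos h] at hmem
    exact (Finset.ne_of_mem_erase hmem) rfl
  have hsFin_mem' : ∀ {x : V} {c}, x ∈ sc c → ¬ (Odd (c.supp.ncard) ∧ x = ↑(rep c)) →
      x ∈ sFin c := by
    intro x c hx hcond
    rw [hsFin]
    dsimp only
    split_ifs with h
    · exact Finset.mem_erase.mpr ⟨fun he => hcond ⟨h, he⟩, Set.mem_toFinset.mpr hx⟩
    · exact Set.mem_toFinset.mpr hx
  choose pc hpc1 hpc2 using fun c => pairing (sFin c) (hsFin_even c)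
    (fun x hx y hy hne => hclique c x (hsFin_mem hx) y (hsFin_mem hy) hne)
  -- the set of U-vertices used by odd components
  set fV : Set V := {x : V | ∃ o : ↥O, ((f o : V)) = x} with hfV
  have hfV_sub : fV ⊆ U := by
    rintro x ⟨o, rfl⟩
    exact (f o).2
  set T : Set V := U \ fV with hT
  have hfV_card : fV.ncard = O.ncard := by
    have h1 : fV = (fun o : ↥O => ((f o : V))) '' Set.univ := by
      ext x
      simp [hfV, Set.mem_image]
    rw [h1, Set.ncard_image_of_injective _
      (fun o1 o2 ho => hfinj (Subtype.coe_injective ho)), Set.ncard_univ,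
      Nat.card_coe_set_eq]
  have hT_even : Even T.ncard := by
    have h1 : T.ncard = U.ncard - O.ncard := by
      rw [hT, Set.ncard_diff hfV_sub, hfV_card]
    have h2 := card_parity GU
    rw [← hO] at h2
    have h3 : Fintype.card ↥(Uᶜ) = (Uᶜ).ncard := by
      rw [← Nat.card_eq_fintype_card, Nat.card_coe_set_eq]
    have h4 : U.ncard + (Uᶜ).ncard = Fintype.card V := by
      rw [Set.ncard_add_ncard_compl, Nat.card_eq_fintype_card]
    rw [h3] at h2
    rw [← h4] at hVeven
    rcases hVeven with ⟨k, hk⟩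
    rcases h2 with ⟨m, hm⟩
    rw [h1]
    have h5 : O.ncard ≤ U.ncard := hcount
    exact ⟨k - m, by omega⟩
  obtain ⟨pT, hpT1, hpT2⟩ := pairing T.toFinset
    (by rw [← Set.ncard_eq_toFinset_card']; exact hT_even)
    (fun x hx y hy hne => hU x (Set.mem_toFinset.mp hx).1 y (Ne.symm hne))
  -- the global involution
  set p : V → V := fun v =>
    if hv : v ∈ U then
      (if h : ∃ o : ↥O, ((f o : V)) = v then ↑(rep (Classical.choose h).1) else pT v)
    else
      (if hodd : Odd ((GU.connectedComponentMk ⟨v, hv⟩).supp.ncard) then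
        (if v = ↑(rep (GU.connectedComponentMk ⟨v, hv⟩)) then
          ↑(f ⟨GU.connectedComponentMk ⟨v, hv⟩, hodd⟩)
        else pc (GU.connectedComponentMk ⟨v, hv⟩) v)
      else pc (GU.connectedComponentMk ⟨v, hv⟩) v) with hp
  -- evaluation lemmas
  have hcompeval : ∀ (x : V) (hxU : x ∉ U) {c : GU.ConnectedComponent}, x ∈ sc c →
      (Odd (c.supp.ncard) ∧ x ≠ ↑(rep c) → p x = pc c x) ∧
      (¬ Odd (c.supp.ncard) → p x = pc c x) ∧
      (∀ h : Odd (c.supp.ncard), x = ↑(rep c) → p x = ↑(f ⟨c, h⟩)) := by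
    intro x hxU c hxc
    have hcomp : GU.connectedComponentMk ⟨x, hxU⟩ = c := hsc_mk hxc hxU
    rw [hp]
    dsimp only
    rw [dif_neg hxU, hcomp]
    refine ⟨?_, ?_, ?_⟩
    · rintro ⟨h1, h2⟩
      rw [dif_pos h1, if_neg h2]
    · intro h1
      rw [dif_neg h1]
    · intro h1 h2
      rw [dif_pos h1, if_pos h2]
  have hUeval : ∀ (x : V) (hxU : x ∈ U),
      (∀ h : ∃ o : ↥O, ((f o : V)) = x, p x = ↑(rep (Classical.choose h).1)) ∧
      (¬ (∃ o : ↥O, ((f o : V)) = x) → p x = pT x) := by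
    intro x hxU
    rw [hp]
    dsimp only
    rw [dif_pos hxU]
    exact ⟨fun h => by rw [dif_pos h], fun h => by rw [dif_neg h]⟩
  -- main verification
  have hmain : ∀ v, p (p v) = v ∧ p v ≠ v ∧ Gmax.Adj v (p v) := by
    intro v
    by_cases hv : v ∈ U
    · by_cases h : ∃ o : ↥O, ((f o : V)) = v
      · have hveq : ((f (Classical.choose h) : V)) = v := Classical.choose_spec h
        set c := (Classical.choose h).1 with hc
        have hpv : p v = ↑(rep c) := (hUeval v hv).1 h
        have hrsc : ↑(rep c) ∈ sc c := hrep_sc c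
        have hrU : (↑(rep c) : V) ∉ U := hsc_notU hrsc
        have hodd : Odd (c.supp.ncard) := (Classical.choose h).2
        have hppv : p ↑(rep c) = ↑(f ⟨c, hodd⟩) :=
          ((hcompeval ↑(rep c) hrU hrsc).2.2 hodd rfl)
        have hfc : (⟨c, hodd⟩ : ↥O) = Classical.choose h := Subtype.ext rfl
        refine ⟨?_, ?_, ?_⟩
        · rw [hpv, hppv, hfc, hveq]
        · rw [hpv]
          exact fun he => hrU (he ▸ hv)
        · rw [hpv]
          exact hU v hv _ (fun he => hrU (he ▸ hv))
      · have hvT : v ∈ T := ⟨hv, h⟩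
        have hpv : p v = pT v := (hUeval v hv).2 h
        obtain ⟨hm, hinv, hne, hadj⟩ := hpT1 v (Set.mem_toFinset.mpr hvT)
        have hmT : pT v ∈ T := Set.mem_toFinset.mp hm
        have hmU : pT v ∈ U := hmT.1
        have hmnf : ¬ (∃ o : ↥O, ((f o : V)) = pT v) := hmT.2
        refine ⟨?_, ?_, ?_⟩
        · rw [hpv, (hUeval (pT v) hmU).2 hmnf, hinv]
        · rw [hpv]; exact hne
        · rw [hpv]; exact hadj
    · set c := GU.connectedComponentMk ⟨v, hv⟩ with hcdef
      have hvsc : v ∈ sc c := hmem_sc ⟨v, hv⟩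
      by_cases hcond : Odd (c.supp.ncard) ∧ v = ↑(rep c)
      · obtain ⟨hodd, hrep'⟩ := hcond
        have hpv : p v = ↑(f ⟨c, hodd⟩) := (hcompeval v hv hvsc).2.2 hodd hrep'
        set u : V := ↑(f ⟨c, hodd⟩) with hu
        have huU : u ∈ U := (f ⟨c, hodd⟩).2
        have hex : ∃ o : ↥O, ((f o : V)) = u := ⟨⟨c, hodd⟩, rfl⟩
        have hchoose : Classical.choose hex = ⟨c, hodd⟩ :=
          hfinj (Subtype.coe_injective (Classical.choose_spec hex))
        refine ⟨?_, ?_, ?_⟩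
        · rw [hpv, (hUeval u huU).1 hex, hchoose, ← hrep']
        · rw [hpv]
          exact fun he => hv (he ▸ huU)
        · rw [hpv]
          exact (hU u huU v (fun he => hv (he ▸ huU))).symm
      · have hvin : v ∈ sFin c := hsFin_mem' hvsc hcond
        have hpv : p v = pc c v := by
          by_cases hodd : Odd (c.supp.ncard)
          · exact (hcompeval v hv hvsc).1 ⟨hodd, fun he => hcond ⟨hodd, he⟩⟩
          · exact (hcompeval v hv hvsc).2.1 hodd
        obtain ⟨hm, hinv, hne, hadj⟩ := hpc1 c v hvin
        have hmsc : pc c v ∈ sc c := hsFin_mem hm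
        have hmU : pc c v ∉ U := hsc_notU hmsc
        have hppv : p (pc c v) = pc c (pc c v) := by
          by_cases hodd : Odd (c.supp.ncard)
          · refine (hcompeval (pc c v) hmU hmsc).1 ⟨hodd, ?_⟩
            intro he
            exact hsFin_rep hodd (he ▸ hm)
          · exact (hcompeval (pc c v) hmU hmsc).2.1 hodd
        exact ⟨by rw [hpv, hppv, hinv], by rw [hpv]; exact hne, by rw [hpv]; exact hadj⟩
  exact matching_of_involution p (fun v => (hmain v).1) (fun v => (hmain v).2.1)
    (fun v => (hmain v).2.2)

lemma odd_comps_mono [Fintype V] {G Gmax : SimpleGraph V} (hle : G ≤ Gmax) (S : Set V) :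
    {c : (Gmax.comap (Subtype.val : ↥(Sᶜ) → V)).ConnectedComponent |
      Odd c.supp.ncard}.ncard ≤
    {c : (G.comap (Subtype.val : ↥(Sᶜ) → V)).ConnectedComponent |
      Odd c.supp.ncard}.ncard := by
  classical
  set A := G.comap (Subtype.val : ↥(Sᶜ) → V) with hA
  set B := Gmax.comap (Subtype.val : ↥(Sᶜ) → V) with hB
  have hAB : A ≤ B := fun u v h => hle h
  set φ : A →g B := SimpleGraph.Hom.ofLE hAB with hφ
  set π : A.ConnectedComponent → B.ConnectedComponent := ConnectedComponent.map φ with hπ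
  have hπmk : ∀ v : ↥(Sᶜ), π (A.connectedComponentMk v) = B.connectedComponentMk v := by
    intro v
    rfl
  letI : Fintype A.ConnectedComponent := Fintype.ofFinite _
  letI : Fintype B.ConnectedComponent := Fintype.ofFinite _
  have hfiber : ∀ c : B.ConnectedComponent, c.supp.ncard =
      ∑ d ∈ Finset.univ.filter (fun d => π d = c), d.supp.ncard := by
    intro c
    rw [Set.ncard_eq_toFinset_card']
    rw [Finset.card_eq_sum_card_fiberwise
      (f := fun v => A.connectedComponentMk v)
      (t := Finset.univ.filter (fun d => π d = c)) ?_]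
    · apply Finset.sum_congr rfl
      intro d hd
      have hdc : π d = c := (Finset.mem_filter.mp hd).2
      rw [Set.ncard_eq_toFinset_card']
      apply congrArg Finset.card
      ext v
      simp only [Finset.mem_filter, Set.mem_toFinset, ConnectedComponent.mem_supp_iff]
      constructor
      · exact fun h => h.2
      · intro h
        refine ⟨?_, h⟩
        rw [← hdc, ← h, hπmk]
    · intro v hv
      rw [Finset.mem_coe, Set.mem_toFinset, ConnectedComponent.mem_supp_iff] at hv
      rw [Finset.mem_coe, Finset.mem_filter]
      exact ⟨Finset.mem_univ _, by rw [hπmk, hv]⟩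
  have hchoice : ∀ c : B.ConnectedComponent, Odd c.supp.ncard →
      ∃ d, π d = c ∧ Odd d.supp.ncard := by
    intro c hc
    by_contra hcon
    push_neg at hcon
    have heven : Even c.supp.ncard := by
      rw [hfiber c]
      exact Finset.even_sum _ (fun d hd =>
        Nat.not_odd_iff_even.mp (hcon d (Finset.mem_filter.mp hd).2))
    exact (Nat.not_odd_iff_even.mpr heven) hc
  set OB := {c : B.ConnectedComponent | Odd c.supp.ncard} with hOB
  set OA := {c : A.ConnectedComponent | Odd c.supp.ncard} with hOA
  have hsel : ∀ c : ↥OB, ∃ d : ↥OA, π ↑d = ↑c := by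
    intro c
    obtain ⟨d, h1, h2⟩ := hchoice ↑c c.2
    exact ⟨⟨d, h2⟩, h1⟩
  choose g hg using hsel
  have ginj : Function.Injective g := by
    intro c1 c2 hgc
    apply Subtype.ext
    rw [← hg c1, ← hg c2, hgc]
  calc OB.ncard = Nat.card ↥OB := (Nat.card_coe_set_eq _).symm
    _ ≤ Nat.card ↥OA := Nat.card_le_card_of_injective g ginj
    _ = OA.ncard := Nat.card_coe_set_eq _

theorem tutte_suff [Fintype V] (G : SimpleGraph V)
    (h : ∀ S : Set V, {c : (G.comap (Subtype.val : ↥(Sᶜ) → V)).ConnectedComponent |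
      Odd c.supp.ncard}.ncard ≤ S.ncard) :
    ∃ M : G.Subgraph, M.IsPerfectMatching := by
  classical
  by_contra hno
  have hfree : G.IsMatchingFree := fun M hM => hno ⟨M, hM⟩
  obtain ⟨Gmax, hle, hfreemax, hmax⟩ := exists_maximal_isMatchingFree hfree
  have hVeven : Even (Fintype.card V) := by
    by_contra hodd
    have h0 := h ∅
    rw [Set.ncard_empty] at h0
    have hpar := card_parity (G.comap (Subtype.val : ↥((∅ : Set V)ᶜ) → V))
    have hcard : Fintype.card ↥((∅ : Set V)ᶜ) = Fintype.card V := by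
      apply Fintype.card_congr
      exact (Equiv.setCongr (by simp)).trans (Equiv.Set.univ V)
    rw [hcard, Nat.le_zero.mp h0] at hpar
    simp only [Nat.add_zero] at hpar
    exact hodd hpar
  set U := {v : V | ∀ w, w ≠ v → Gmax.Adj v w} with hUdef
  by_cases hBc : ∃ b a c, b ∉ U ∧ Gmax.Adj a b ∧ Gmax.Adj b c ∧ ¬ Gmax.Adj a c ∧ a ≠ c
  · obtain ⟨b, a, c, hbU, h1, h2, h3, h4⟩ := hBc
    obtain ⟨d, hd1, hd2⟩ : ∃ d, ¬ Gmax.Adj b d ∧ d ≠ b := by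
      have hb' := hbU
      rw [hUdef, Set.mem_setOf_eq] at hb'
      push_neg at hb'
      obtain ⟨w, hw1, hw2⟩ := hb'
      exact ⟨w, hw2, hw1⟩
    exact (caseB hfreemax hmax h1 h2 h3 h4 hd1 (Ne.symm hd2)).elim
  · push_neg at hBc
    have hA : ∀ v x y : V, v ∉ U → Gmax.Adj x v → Gmax.Adj v y → x ≠ y → Gmax.Adj x y := by
      intro v x y hv h1 h2 hne
      by_contra hn
      exact hne (hBc v x y hv h1 h2 hn)
    have hU : ∀ v ∈ U, ∀ w, w ≠ v → Gmax.Adj v w := fun v hv => hv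
    have hcount : {c : (Gmax.comap (Subtype.val : ↥(Uᶜ) → V)).ConnectedComponent |
        Odd c.supp.ncard}.ncard ≤ U.ncard := by
      by_contra hc
      push_neg at hc
      have hm := odd_comps_mono hle U
      have hh := h U
      omega
    obtain ⟨M, hM⟩ := caseA U hU hA hVeven hcount
    exact hfreemax M hM

theorem cubic_tutte [Fintype V] (G : SimpleGraph V) [DecidableRel G.Adj]
    (hcubic : ∀ v, G.degree v = 3)
    (hbridgeless : ∀ e ∈ G.edgeSet, ¬ G.IsBridge e) (S : Set V) :
    {c : (G.comap (Subtype.val : ↥(Sᶜ) → V)).ConnectedComponent |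
      Odd c.supp.ncard}.ncard ≤ S.ncard := by
  classical
  set GS := G.comap (Subtype.val : ↥(Sᶜ) → V) with hGS
  letI : Fintype GS.ConnectedComponent := Fintype.ofFinite _
  set sc : GS.ConnectedComponent → Set V := fun c => Subtype.val '' c.supp with hsc
  have hsc_notS : ∀ {x : V} {c}, x ∈ sc c → x ∉ S := by
    rintro x c ⟨x', _, rfl⟩
    exact x'.2
  have hsc_mk : ∀ {x : V} {c} (hx : x ∈ sc c) (hxS : x ∉ S),
      GS.connectedComponentMk ⟨x, hxS⟩ = c := by
    rintro x c ⟨x', hx', rfl⟩ hxS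
    have heq : (⟨(x' : V), hxS⟩ : ↥(Sᶜ)) = x' := Subtype.ext rfl
    rw [heq]
    exact (ConnectedComponent.mem_supp_iff _ _).mp hx'
  have hmem_sc : ∀ (x : ↥(Sᶜ)), (x : V) ∈ sc (GS.connectedComponentMk x) :=
    fun x => ⟨x, (ConnectedComponent.mem_supp_iff _ _).mpr rfl, rfl⟩
  have hsc_card : ∀ c : GS.ConnectedComponent, (sc c).ncard = c.supp.ncard :=
    fun c => Set.ncard_image_of_injective _ Subtype.val_injective
  have hcross : ∀ {c} {v w : V}, v ∈ sc c → G.Adj v w → w ∉ sc c → w ∈ S := by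
    intro c v w hv hadj hw
    by_contra hwS
    apply hw
    have hv' := hsc_mk hv (hsc_notS hv)
    have hadj' : GS.Adj ⟨w, hwS⟩ ⟨v, hsc_notS hv⟩ := by
      exact hadj.symm
    have hmkeq : GS.connectedComponentMk ⟨w, hwS⟩ = c :=
      (ConnectedComponent.eq.mpr hadj'.reachable).trans hv'
    exact ⟨⟨w, hwS⟩, (ConnectedComponent.mem_supp_iff _ _).mpr hmkeq, rfl⟩
  set Dc : GS.ConnectedComponent → Finset G.Dart := fun c =>
    Finset.univ.filter (fun d => d.snd ∈ sc c ∧ d.fst ∉ sc c) with hDc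
  -- parity of the boundary dart count
  have hDodd : ∀ c, Odd c.supp.ncard → Odd (Dc c).card := by
    intro c hodd
    have htot : (Finset.univ.filter (fun d : G.Dart => d.snd ∈ sc c)).card
        = 3 * (sc c).ncard := by
      rw [Finset.card_eq_sum_card_fiberwise (f := fun d : G.Dart => d.snd) (t := (sc c).toFinset)
        (fun d hd => Set.mem_toFinset.mpr (Finset.mem_filter.mp hd).2)]
      have hfib : ∀ v ∈ (sc c).toFinset,
          ((Finset.univ.filter (fun d : G.Dart => d.snd ∈ sc c)).filter
            (fun d => d.snd = v)).card = 3 := by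
        intro v hv
        rw [Finset.filter_filter]
        have heq : (Finset.univ.filter (fun d : G.Dart => d.snd ∈ sc c ∧ d.snd = v))
            = Finset.univ.filter (fun d : G.Dart => d.snd = v) := by
          apply Finset.ext
          intro d
          simp only [Finset.mem_filter, Finset.mem_univ, true_and, and_iff_right_iff_imp]
          intro h
          rw [h]
          exact Set.mem_toFinset.mp hv
        rw [heq]
        have hdd := dart_snd_card G v
        rw [hcubic] at hdd
        convert hdd using 2
      rw [Finset.sum_congr rfl hfib, Finset.sum_const, smul_eq_mul, mul_comm,
        ← Set.ncard_eq_toFinset_card']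
    have hsplitraw := Finset.card_filter_add_card_filter_not
      (s := Finset.univ.filter (fun d : G.Dart => d.snd ∈ sc c))
      (p := fun d : G.Dart => d.fst ∈ sc c)
    have he1 : (Finset.univ.filter (fun d : G.Dart => d.snd ∈ sc c)).filter
        (fun d => d.fst ∈ sc c) =
        Finset.univ.filter (fun d : G.Dart => d.snd ∈ sc c ∧ d.fst ∈ sc c) := by
      rw [Finset.filter_filter]
    have he2 : (Finset.univ.filter (fun d : G.Dart => d.snd ∈ sc c)).filter
        (fun d => ¬ d.fst ∈ sc c) = Dc c := by
      rw [Finset.filter_filter, hDc]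
    rw [he1, he2, htot] at hsplitraw
    have heven : Even (Finset.univ.filter
        (fun d : G.Dart => d.snd ∈ sc c ∧ d.fst ∈ sc c)).card := by
      apply even_card_invol _ Dart.symm
      · intro d hd
        rw [Finset.mem_filter] at hd ⊢
        exact ⟨Finset.mem_univ _, hd.2.2, hd.2.1⟩
      · intro d _
        exact Dart.symm_symm d
      · intro d _
        exact Dart.symm_ne d
    have hoddn : Odd (sc c).ncard := by rw [hsc_card]; exact hodd
    rcases heven with ⟨k, hk⟩
    rcases hoddn with ⟨m, hm⟩
    refine ⟨3 * m + 1 - k, by omega⟩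
  -- no boundary of size one (bridgeless)
  have hD1 : ∀ c, (Dc c).card ≠ 1 := by
    intro c hone
    obtain ⟨d0, hd0⟩ := Finset.card_eq_one.mp hone
    have hd0mem : d0 ∈ Dc c := hd0 ▸ Finset.mem_singleton_self d0
    rw [hDc, Finset.mem_filter] at hd0mem
    obtain ⟨-, h1, h2⟩ := hd0mem
    apply hbridgeless d0.edge d0.edge_mem
    have hedge : d0.edge = s(d0.fst, d0.snd) := rfl
    rw [hedge, isBridge_iff]
    rintro ⟨p⟩
    obtain ⟨d, hd, hdf, hds⟩ := p.exists_boundary_dart (sc c)ᶜ h2 (fun h => h h1)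
    have hGadj : G.Adj d.fst d.snd := d.adj.1
    have hd'mem : (⟨d.toProd, hGadj⟩ : G.Dart) ∈ Dc c := by
      rw [hDc, Finset.mem_filter]
      exact ⟨Finset.mem_univ _, Set.not_notMem.mp hds, hdf⟩
    rw [hd0, Finset.mem_singleton] at hd'mem
    have hedgeeq : s(d.fst, d.snd) = s(d0.fst, d0.snd) := by
      have := congrArg Dart.edge hd'mem
      exact this
    exact d.adj.2 ((fromEdgeSet_adj _).mpr ⟨hedgeeq, hGadj.ne⟩)
  -- assembly
  set Ofin := Finset.univ.filter
    (fun c : GS.ConnectedComponent => Odd c.supp.ncard) with hOfin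
  have hO3 : ∀ c ∈ Ofin, 3 ≤ (Dc c).card := by
    intro c hc
    have ho := hDodd c (Finset.mem_filter.mp hc).2
    have h1 := hD1 c
    rcases ho with ⟨k, hk⟩
    omega
  have hdisj : ∀ c ∈ Ofin, ∀ c' ∈ Ofin, c ≠ c' → Disjoint (Dc c) (Dc c') := by
    intro c _ c' _ hne
    rw [Finset.disjoint_left]
    intro d hd hd'
    have h1 : d.snd ∈ sc c := ((Finset.mem_filter.mp hd).2).1
    have h2 : d.snd ∈ sc c' := ((Finset.mem_filter.mp hd').2).1
    exact hne (((hsc_mk h1 (hsc_notS h1)).symm).trans (hsc_mk h2 (hsc_notS h1)))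
  have hsubDS : ∀ c, Dc c ⊆ Finset.univ.filter (fun d : G.Dart => d.fst ∈ S) := by
    intro c d hd
    rw [Finset.mem_filter] at hd ⊢
    exact ⟨Finset.mem_univ _, hcross hd.2.1 d.adj.symm hd.2.2⟩
  have hDScard : (Finset.univ.filter (fun d : G.Dart => d.fst ∈ S)).card = 3 * S.ncard := by
    rw [Finset.card_eq_sum_card_fiberwise (f := fun d : G.Dart => d.fst) (t := S.toFinset)
      (fun d hd => Set.mem_toFinset.mpr (Finset.mem_filter.mp hd).2)]
    have hfib : ∀ v ∈ S.toFinset,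
        ((Finset.univ.filter (fun d : G.Dart => d.fst ∈ S)).filter
          (fun d => d.fst = v)).card = 3 := by
      intro v hv
      rw [Finset.filter_filter]
      have heq : (Finset.univ.filter (fun d : G.Dart => d.fst ∈ S ∧ d.fst = v))
          = Finset.univ.filter (fun d : G.Dart => d.fst = v) := by
        apply Finset.ext
        intro d
        simp only [Finset.mem_filter, Finset.mem_univ, true_and, and_iff_right_iff_imp]
        intro h
        rw [h]
        exact Set.mem_toFinset.mp hv
      rw [heq]
      have hdd := G.dart_fst_fiber_card_eq_degree v
      rw [hcubic] at hdd
      convert hdd using 2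
    rw [Finset.sum_congr rfl hfib, Finset.sum_const, smul_eq_mul, mul_comm,
      ← Set.ncard_eq_toFinset_card']
  have hchain : 3 * Ofin.card ≤ 3 * S.ncard := by
    calc 3 * Ofin.card = ∑ _c ∈ Ofin, 3 := by rw [Finset.sum_const, smul_eq_mul, mul_comm]
    _ ≤ ∑ c ∈ Ofin, (Dc c).card := Finset.sum_le_sum hO3
    _ = (Ofin.biUnion Dc).card := (Finset.card_biUnion hdisj).symm
    _ ≤ (Finset.univ.filter (fun d : G.Dart => d.fst ∈ S)).card := by
        apply Finset.card_le_card
        intro d hd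
        obtain ⟨c, hc, hdc⟩ := Finset.mem_biUnion.mp hd
        exact hsubDS c hdc
    _ = 3 * S.ncard := hDScard
  have hOeq : {c : GS.ConnectedComponent | Odd c.supp.ncard}.ncard = Ofin.card := by
    rw [Set.ncard_eq_toFinset_card']
    exact congrArg Finset.card (Finset.ext (fun x => by simp [hOfin]))
  rw [hOeq]
  omega

end PetersenAux

/-- Petersen: every bridgeless cubic graph has a 2-factor, i.e. a spanning subgraph in which
every vertex has degree exactly 2. -/
theorem stmt6 (V : Type) [Fintype V] (G : SimpleGraph V) [DecidableRel G.Adj]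
    (hcubic : ∀ v : V, G.degree v = 3)
    (hbridgeless : ∀ e ∈ G.edgeSet, ¬ G.IsBridge e) :
    ∃ H : SimpleGraph.Subgraph G, H.IsSpanning ∧ ∀ v : V, (H.neighborSet v).ncard = 2 := by
  classical
  obtain ⟨M, hM⟩ := PetersenAux.tutte_suff G
    (fun S => PetersenAux.cubic_tutte G hcubic hbridgeless S)
  refine ⟨⟨Set.univ, fun v w => G.Adj v w ∧ ¬ M.Adj v w,
    fun h => h.1, fun _ => trivial, ⟨fun v w h => ⟨h.1.symm, fun hm => h.2 hm.symm⟩⟩⟩,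
    fun v => trivial, ?_⟩
  intro v
  obtain ⟨w0, hw0, huniq⟩ := SimpleGraph.Subgraph.isPerfectMatching_iff.mp hM v
  have hset : {w : V | G.Adj v w ∧ ¬ M.Adj v w} = G.neighborSet v \ {w0} := by
    ext w
    simp only [Set.mem_setOf_eq, Set.mem_diff, SimpleGraph.mem_neighborSet,
      Set.mem_singleton_iff]
    constructor
    · rintro ⟨h1, h2⟩
      exact ⟨h1, fun he => h2 (he ▸ hw0)⟩
    · rintro ⟨h1, h2⟩
      exact ⟨h1, fun hm => h2 (huniq w hm)⟩
  have hdeg : (G.neighborSet v).ncard = 3 := by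
    rw [← Nat.card_coe_set_eq, Nat.card_eq_fintype_card,
      SimpleGraph.card_neighborSet_eq_degree, hcubic]
  have hw0mem : w0 ∈ G.neighborSet v := M.adj_sub hw0
  show ({w : V | G.Adj v w ∧ ¬ M.Adj v w}).ncard = 2
  rw [hset, Set.ncard_diff_singleton_of_mem hw0mem, hdeg]
end

section
/- In a cubic graph G with girth at least g, after deleting the vertices uncovered by a maximum matching M and all edges of M, every cycle in the resulting graph of maximum degree ≤ 2 has length at least g, and every maximal path has length determined by two deleted endpoints, so the number of resulting paths is at most 3·(number of uncovered vertices)/2 plus the trivial bound; in particular if M covers all but at most n/g vertices, the resulting decomposition has at most 3n/(2g) paths and all cycles have length at least g. -/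
set_option maxHeartbeats 1000000

open Finset

attribute [local instance] Classical.propDecidable

namespace SimpleGraph

variable {W : Type} [Fintype W] (H : SimpleGraph W)

lemma reachable_induce_supp (C : H.ConnectedComponent) :
    ∀ {x y : W} (_ : H.Walk x y) (hx : x ∈ C.supp) (hy : y ∈ C.supp),
      (H.induce C.supp).Reachable ⟨x, hx⟩ ⟨y, hy⟩ := by
  intro x y p
  induction p with
  | nil => intro hx hy; exact Reachable.refl _
  | @cons a b c h q ih =>
    intro hx hy
    have hb : b ∈ C.supp := by
      rw [ConnectedComponent.mem_supp_iff] at hy ⊢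
      rw [← hy]
      exact ConnectedComponent.sound q.reachable
    have hadj : (H.induce C.supp).Adj ⟨a, hx⟩ ⟨b, hb⟩ := h
    exact hadj.reachable.trans (ih hb hy)

lemma induce_supp_isTree (C : H.ConnectedComponent)
    (hac : ∀ v : W, H.connectedComponentMk v = C → ∀ w : H.Walk v v, ¬ w.IsCycle) :
    (H.induce C.supp).IsTree := by
  refine ⟨?_, ?_⟩
  · rw [connected_iff]
    constructor
    · intro x y
      obtain ⟨p⟩ : H.Reachable x.1 y.1 := by
        rw [← ConnectedComponent.eq, (ConnectedComponent.mem_supp_iff _ _).mp x.2,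
          (ConnectedComponent.mem_supp_iff _ _).mp y.2]
      have := reachable_induce_supp H C p x.2 y.2
      simpa using this
    · obtain ⟨v, hv⟩ := C.exists_rep
      exact ⟨⟨v, hv⟩⟩
  · intro x p hp
    have hinj : Function.Injective (fun (w : C.supp) => (w : W)) := Subtype.val_injective
    have hcyc : (p.map ⟨Subtype.val, fun {a b} h => h⟩).IsCycle := hp.map hinj
    exact hac x.1 ((ConnectedComponent.mem_supp_iff _ _).mp x.2) _ hcyc

lemma degree_induce_supp (C : H.ConnectedComponent) (v : C.supp) :
    (H.induce C.supp).degree v = H.degree v.1 := by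
  rw [← card_neighborFinset_eq_degree, ← card_neighborFinset_eq_degree]
  refine Finset.card_bij (fun w _ => (w : W)) ?_ ?_ ?_
  · intro w hw
    rw [mem_neighborFinset] at hw ⊢
    exact hw
  · intro a _ b _ hab
    exact Subtype.ext hab
  · intro w hw
    rw [mem_neighborFinset] at hw
    have hwsupp : w ∈ C.supp := by
      rw [ConnectedComponent.mem_supp_iff,
        ← (ConnectedComponent.mem_supp_iff _ _).mp v.2]
      exact ConnectedComponent.sound hw.symm.reachable
    refine ⟨⟨w, hwsupp⟩, ?_, rfl⟩
    rw [mem_neighborFinset]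
    exact hw

lemma sum_degree_acyclic_comp (C : H.ConnectedComponent)
    (hac : ∀ v : W, H.connectedComponentMk v = C → ∀ w : H.Walk v v, ¬ w.IsCycle) :
    (∑ v ∈ univ.filter (fun v => H.connectedComponentMk v = C), H.degree v) + 2
      = 2 * (univ.filter (fun v => H.connectedComponentMk v = C)).card := by
  have htree := H.induce_supp_isTree C hac
  have hcard := htree.card_edgeFinset
  have hhs : ∑ x : C.supp, (H.induce C.supp).degree x
      = 2 * (H.induce C.supp).edgeFinset.card := sum_degrees_eq_twice_card_edges _
  have h1 : ∑ v ∈ univ.filter (fun v => H.connectedComponentMk v = C), H.degree v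
      = ∑ x : C.supp, (H.induce C.supp).degree x := by
    rw [Finset.sum_subtype (univ.filter (fun v => H.connectedComponentMk v = C))
      (p := fun v => v ∈ C.supp)
      (by intro x; simp [ConnectedComponent.mem_supp_iff]) (fun v => H.degree v)]
    exact Finset.sum_congr rfl (fun x _ => (degree_induce_supp H C x).symm)
  have h2 : Fintype.card C.supp
      = (univ.filter (fun v => H.connectedComponentMk v = C)).card := by
    rw [← Set.toFinset_card]
    congr 1
    ext v
    simp [ConnectedComponent.mem_supp_iff]
  omega

lemma sum_degree_add_paths_le (hdeg2 : ∀ v : W, H.degree v ≤ 2)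
    (P : Finset H.ConnectedComponent)
    (hP' : ∀ C ∈ P,
      ∀ v : W, H.connectedComponentMk v = C → ∀ w : H.Walk v v, ¬ w.IsCycle) :
    (∑ v : W, H.degree v) + 2 * P.card ≤ 2 * Fintype.card W := by
  classical
  have hsum : ∑ v : W, H.degree v
      = ∑ C : H.ConnectedComponent,
          ∑ v ∈ univ.filter (fun v => H.connectedComponentMk v = C), H.degree v :=
    (Finset.sum_fiberwise _ _ _).symm
  have hcardW : Fintype.card W
      = ∑ C : H.ConnectedComponent,
          (univ.filter (fun v => H.connectedComponentMk v = C)).card := by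
    rw [← Finset.card_univ]
    exact Finset.card_eq_sum_card_fiberwise (fun x _ => Finset.mem_univ _)
  have hP : 2 * P.card
      = ∑ C : H.ConnectedComponent, (if C ∈ P then 2 else 0) := by
    rw [Finset.sum_ite_mem, Finset.univ_inter, Finset.sum_const, smul_eq_mul, mul_comm]
  rw [hsum, hcardW, hP, Finset.mul_sum, ← Finset.sum_add_distrib]
  apply Finset.sum_le_sum
  intro C _
  by_cases hC : C ∈ P
  · rw [if_pos hC]
    exact le_of_eq (H.sum_degree_acyclic_comp C (hP' C hC))
  · rw [if_neg hC, add_zero]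
    calc ∑ v ∈ univ.filter (fun v => H.connectedComponentMk v = C), H.degree v
        ≤ (univ.filter (fun v => H.connectedComponentMk v = C)).card * 2 := by
          apply Finset.sum_le_card_nsmul
          intro x _
          exact hdeg2 x
      _ = 2 * (univ.filter (fun v => H.connectedComponentMk v = C)).card := mul_comm _ _

end SimpleGraph

/-- In a cubic graph `G` of girth at least `g`, if `M` is a matching covering all but at most
`n/g` vertices and `H` is obtained by deleting the uncovered vertices and the edges of `M`,
then every cycle of `H` has length at least `g` and the number of components of `H` that are
paths (i.e. contain no cycle) is at most `3n/(2g)`. -/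
theorem stmt8 (V : Type) [Fintype V] (G : SimpleGraph V) [DecidableRel G.Adj]
    (g : ℕ) (hg : 3 ≤ g) (hcubic : ∀ v : V, G.degree v = 3)
    (hgirth : (g : ℕ∞) ≤ G.egirth)
    (M : SimpleGraph.Subgraph G) (hM : M.IsMatching)
    (hcover : (Fintype.card V : ℝ) - M.verts.ncard ≤ (Fintype.card V : ℝ) / g)
    (H : SimpleGraph M.verts)
    (hH : H = (G.induce M.verts).deleteEdges
        {e : Sym2 M.verts | e.map Subtype.val ∈ M.edgeSet}) :
    (∀ (v : M.verts) (w : H.Walk v v), w.IsCycle → g ≤ w.length) ∧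
    ({C : H.ConnectedComponent |
        ∀ (v : M.verts), H.connectedComponentMk v = C →
          ∀ w : H.Walk v v, ¬ w.IsCycle}.ncard : ℝ)
      ≤ 3 * (Fintype.card V : ℝ) / (2 * g) := by
  classical
  subst hH
  set H := (G.induce M.verts).deleteEdges
      {e : Sym2 M.verts | e.map Subtype.val ∈ M.edgeSet} with hHdef
  -- adjacency in H
  have hAdj : ∀ a b : M.verts, H.Adj a b ↔ (G.Adj a.1 b.1 ∧ ¬ M.Adj a.1 b.1) := by
    intro a b
    rw [hHdef, SimpleGraph.deleteEdges_adj]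
    simp [SimpleGraph.comap_adj, Set.mem_setOf_eq, Sym2.map_pair_eq,
      SimpleGraph.Subgraph.mem_edgeSet]
  have hHG : ∀ a b : M.verts, H.Adj a b → G.Adj a.1 b.1 := fun a b h => ((hAdj a b).mp h).1
  let f : H →g G := ⟨Subtype.val, fun {a b} h => hHG a b h⟩
  have part1 : ∀ (v : M.verts) (w : H.Walk v v), w.IsCycle → g ≤ w.length := by
    intro v w hw
    have hwG : (w.map f).IsCycle := hw.map Subtype.val_injective
    have := SimpleGraph.le_egirth.mp hgirth _ _ hwG
    rw [SimpleGraph.Walk.length_map] at this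
    exact_mod_cast this
  refine ⟨part1, ?_⟩
  -- the degree identity: degree in H plus number of uncovered neighbours equals 2
  have hdeg : ∀ v : M.verts,
      H.degree v + (univ.filter (fun u : V => u ∉ M.verts ∧ G.Adj v.1 u)).card = 2 := by
    intro v
    obtain ⟨w0, hw0, huniq⟩ := hM v.2
    have hw0m : w0 ∈ M.verts := hw0.snd_mem
    set A : Finset M.verts := univ.filter (fun w : M.verts => G.Adj v.1 w.1) with hA
    have hdegA : H.degree v = (A.filter (fun w => ¬ M.Adj v.1 w.1)).card := by
      rw [← SimpleGraph.card_neighborFinset_eq_degree]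
      congr 1
      ext w
      simp only [SimpleGraph.mem_neighborFinset, hAdj v w, hA, Finset.mem_filter,
        Finset.mem_univ, true_and]
    have hone : (A.filter (fun w => M.Adj v.1 w.1)).card = 1 := by
      rw [Finset.card_eq_one]
      refine ⟨⟨w0, hw0m⟩, ?_⟩
      ext x
      simp only [Finset.mem_filter, Finset.mem_singleton, hA, Finset.mem_univ, true_and]
      constructor
      · rintro ⟨_, hx⟩
        exact Subtype.ext (huniq _ hx)
      · rintro rfl
        exact ⟨hw0.adj_sub, hw0⟩
    have hsplit : 1 + H.degree v = A.card := by
      rw [hdegA, ← hone]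
      exact Finset.card_filter_add_card_filter_not _
    have hAcard : A.card = (univ.filter (fun u : V => u ∈ M.verts ∧ G.Adj v.1 u)).card := by
      refine Finset.card_bij (fun w _ => w.1) ?_ ?_ ?_
      · intro w hw
        simp only [hA, Finset.mem_filter, Finset.mem_univ, true_and] at hw ⊢
        exact ⟨w.2, hw⟩
      · intro a _ b _ h
        exact Subtype.ext h
      · intro u hu
        simp only [Finset.mem_filter, Finset.mem_univ, true_and] at hu
        exact ⟨⟨u, hu.1⟩, by simp [hA, hu.2], rfl⟩
    have h3 : (univ.filter (fun u : V => u ∈ M.verts ∧ G.Adj v.1 u)).card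
        + (univ.filter (fun u : V => u ∉ M.verts ∧ G.Adj v.1 u)).card = 3 := by
      have hdeg3 := hcubic v.1
      rw [← SimpleGraph.card_neighborFinset_eq_degree, SimpleGraph.neighborFinset_eq_filter]
        at hdeg3
      have := Finset.card_filter_add_card_filter_not
        (s := univ.filter (fun u : V => G.Adj v.1 u)) (p := fun u => u ∈ M.verts)
      rw [Finset.filter_filter, Finset.filter_filter] at this
      rw [hdeg3] at this
      rw [← this]
      congr 1 <;> · congr 1; ext u; simp [and_comm]
    omega
  -- double counting the uncovered-neighbour incidences
  have hdouble : (∑ v : M.verts, (univ.filter (fun u : V => u ∉ M.verts ∧ G.Adj v.1 u)).card)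
      ≤ 3 * (univ.filter (fun u : V => u ∉ M.verts)).card := by
    have hswap : (∑ v : M.verts, (univ.filter (fun u : V => u ∉ M.verts ∧ G.Adj v.1 u)).card)
        = ∑ u ∈ univ.filter (fun u : V => u ∉ M.verts),
            (univ.filter (fun v : M.verts => G.Adj v.1 u)).card := by
      simp only [Finset.card_filter]
      rw [Finset.sum_comm]
      rw [Finset.sum_filter]
      apply Finset.sum_congr rfl
      intro u _
      by_cases hu : u ∉ M.verts
      · simp [hu]
      · simp [hu]
    rw [hswap]
    have hbound : ∀ u : V, (univ.filter (fun v : M.verts => G.Adj v.1 u)).card ≤ 3 := by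
      intro u
      rw [← hcubic u, ← SimpleGraph.card_neighborFinset_eq_degree]
      apply Finset.card_le_card_of_injOn (fun v => v.1)
      · intro v hv
        simp only [Finset.mem_coe, Finset.mem_filter, Finset.mem_univ, true_and] at hv ⊢
        rw [SimpleGraph.mem_neighborFinset]
        exact hv.symm
      · intro a _ b _ h
        exact Subtype.ext h
    calc ∑ u ∈ univ.filter (fun u : V => u ∉ M.verts),
            (univ.filter (fun v : M.verts => G.Adj v.1 u)).card
        ≤ ∑ _u ∈ univ.filter (fun u : V => u ∉ M.verts), 3 :=
          Finset.sum_le_sum (fun u _ => hbound u)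
      _ = 3 * (univ.filter (fun u : V => u ∉ M.verts)).card := by
          rw [Finset.sum_const, smul_eq_mul, mul_comm]
  -- degree bound
  have hdeg2 : ∀ v : M.verts, H.degree v ≤ 2 := by
    intro v
    have := hdeg v
    omega
  -- the main counting inequality
  have hEqB : (∑ v : M.verts, H.degree v)
      + (∑ v : M.verts, (univ.filter (fun u : V => u ∉ M.verts ∧ G.Adj v.1 u)).card)
      = 2 * Fintype.card M.verts := by
    rw [← Finset.sum_add_distrib]
    rw [Finset.sum_congr rfl (fun v _ => hdeg v)]
    rw [Finset.sum_const, smul_eq_mul, Finset.card_univ, mul_comm]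
  set P := univ.filter (fun C : H.ConnectedComponent =>
      ∀ v : M.verts, H.connectedComponentMk v = C → ∀ w : H.Walk v v, ¬ w.IsCycle) with hPdef
  have hmain := H.sum_degree_add_paths_le (fun v => by convert hdeg2 v) P (by
    intro C hC
    rw [hPdef, Finset.mem_filter] at hC
    exact hC.2)
  set U := (univ.filter (fun u : V => u ∉ M.verts)).card with hUdef
  have hkey : 2 * P.card ≤ 3 * U := by
    have hmain' : (∑ v : M.verts, H.degree v) + 2 * P.card ≤ 2 * Fintype.card M.verts := by
      convert hmain
    omega
  -- identify the ncard with P.card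
  have hncard : {C : H.ConnectedComponent |
      ∀ (v : M.verts), H.connectedComponentMk v = C →
        ∀ w : H.Walk v v, ¬ w.IsCycle}.ncard = P.card := by
    rw [Set.ncard_eq_toFinset_card']
    congr 1
    ext C
    simp [hPdef]
  rw [hncard]
  -- cardinalities of covered / uncovered vertices
  have hUcard : U + Fintype.card M.verts = Fintype.card V := by
    have := Finset.card_filter_add_card_filter_not
      (s := (univ : Finset V)) (p := fun u => u ∉ M.verts)
    rw [Finset.card_univ] at this
    rw [← this, hUdef]
    congr 1
    rw [Fintype.card_subtype]
    congr 1
    ext u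
    simp
  have hncardM : (M.verts.ncard : ℝ) = (Fintype.card M.verts : ℝ) := by
    norm_cast
    rw [Set.ncard_eq_toFinset_card', Set.toFinset_card]
  -- real arithmetic
  have hgpos : (0 : ℝ) < g := by positivity
  have hU_le : (U : ℝ) ≤ (Fintype.card V : ℝ) / g := by
    have : (U : ℝ) = (Fintype.card V : ℝ) - Fintype.card M.verts := by
      have := hUcard
      push_cast [← this]
      ring
    rw [this, ← hncardM]
    exact hcover
  have hkeyR : 2 * (P.card : ℝ) ≤ 3 * U := by exact_mod_cast hkey
  rw [le_div_iff₀ (by positivity)]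
  have hUg : (U : ℝ) * g ≤ (Fintype.card V : ℝ) := by
    rw [← le_div_iff₀ hgpos]
    exact hU_le
  nlinarith [hkeyR, hUg, hgpos]
end
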